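/- arXiv:2104.03593 — 10 statements merged into one kernel-verified Lean document; each statement's English description precedes it below -/
import Mathlib

section
/- Let n ≥ 1 and α ∈ Sₙ, and let y ∈ Sₙ be a solution of α ∘ y ∘ α⁻¹ = y². Then y and y² have the same cycle type, every cycle of y has odd length (y has no cycles of even length, i.e. every element of the cycle type of y is odd), and for every point c the set of points of the cycle of y through c equals the set of points of the cycle of y² through c. -/
/-- If `y` solves `α ∘ y ∘ α⁻¹ = y²`, then `y` and `y²` have the same cycle type,
every cycle of `y` has odd length, and for every point `c` the point set of the
cycle of `y` through `c` equals the point set of the cycle of `y²` through `c`. -/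
theorem stmt_6 (n : ℕ) (hn : 1 ≤ n) (α y : Equiv.Perm (Fin n))
    (hy : α * y * α⁻¹ = y ^ 2) :
    y.cycleType = (y ^ 2).cycleType ∧
    (∀ r ∈ y.cycleType, Odd r) ∧
    ∀ c : Fin n,
      {x : Fin n | ∃ i : ℕ, (y ^ i) c = x} =
        {x : Fin n | ∃ i : ℕ, ((y ^ 2) ^ i) c = x} := by
  have hct : y.cycleType = (y ^ 2).cycleType := by
    rw [← hy, Equiv.Perm.cycleType_conj]
  have horder : orderOf (y ^ 2) = orderOf y := by
    conv_lhs => rw [← hy]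
    have h : SemiconjBy α y (α * y * α⁻¹) := by
      unfold SemiconjBy; group
    exact (h.orderOf_eq α).symm
  set N := orderOf y with hN
  have hNpos : 0 < N := orderOf_pos y
  have hodd : Odd N := by
    by_contra h
    have heven : 2 ∣ N := (Nat.not_odd_iff_even.mp h).two_dvd
    have h2 : orderOf (y ^ 2) = N / 2 := by
      rw [orderOf_pow, Nat.gcd_eq_right heven]
    rw [horder] at h2
    have : N / 2 < N := Nat.div_lt_self hNpos one_lt_two
    omega
  refine ⟨hct, ?_, ?_⟩
  · intro r hr
    have hdvd : r ∣ N := by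
      rw [hN, ← Equiv.Perm.lcm_cycleType]
      exact Multiset.dvd_lcm hr
    obtain ⟨k, hk⟩ := hdvd
    rcases Nat.even_or_odd r with he | ho
    · exfalso
      have : Even N := hk ▸ he.mul_right k
      exact (Nat.not_even_iff_odd.mpr hodd) this
    · exact ho
  · intro c
    ext x
    simp only [Set.mem_setOf_eq]
    constructor
    · rintro ⟨i, rfl⟩
      refine ⟨(N + 1) / 2 * i, ?_⟩
      rw [← pow_mul]
      have hk2 : 2 * ((N + 1) / 2) = N + 1 := by
        obtain ⟨m, hm⟩ := hodd; omega
      have h2 : 2 * ((N + 1) / 2 * i) = N * i + i := by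
        rw [← mul_assoc, hk2]; ring
      rw [h2, pow_add, pow_mul, pow_orderOf_eq_one, one_pow, one_mul]
    · rintro ⟨i, rfl⟩
      exact ⟨2 * i, by rw [pow_mul]⟩
end

section
/- Let n ≥ 1 and α ∈ Sₙ, let y ∈ Sₙ be a solution of α ∘ y ∘ α⁻¹ = y², and let c ∈ {1,…,n}, d ≥ 1, r ≥ 1, s ≥ 1 be such that y^r(c) = c, α^d(c) = y^s(c), and gcd(2^d − 1, r) = 1. Then there exists an integer u ≥ 1 such that α^d(y^u(c)) = y^u(c); that is, α^d has a fixed point lying on the cycle of y through c. -/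
/-- If `y` solves `α ∘ y ∘ α⁻¹ = y²`, `y^r(c) = c`, `α^d(c) = y^s(c)` and
`gcd(2^d - 1, r) = 1` (with `d, r, s ≥ 1`), then `α^d` has a fixed point lying on
the cycle of `y` through `c`: there is `u ≥ 1` with `α^d(y^u(c)) = y^u(c)`. -/
theorem stmt_8 (n : ℕ) (hn : 1 ≤ n) (α y : Equiv.Perm (Fin n))
    (hy : α * y * α⁻¹ = y ^ 2) (c : Fin n) (d r s : ℕ)
    (hd : 1 ≤ d) (hr : 1 ≤ r) (hs : 1 ≤ s)
    (hrc : (y ^ r) c = c) (hdc : (α ^ d) c = (y ^ s) c)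
    (hgcd : Nat.gcd (2 ^ d - 1) r = 1) :
    ∃ u : ℕ, 1 ≤ u ∧ (α ^ d) ((y ^ u) c) = (y ^ u) c := by
  classical
  haveI : NeZero r := ⟨Nat.one_le_iff_ne_zero.mp hr⟩
  -- conjugation lemma
  have hconj : ∀ k : ℕ, α ^ k * y * (α ^ k)⁻¹ = y ^ (2 ^ k) := by
    intro k
    induction k with
    | zero => simp
    | succ k ih =>
      have : α ^ (k+1) * y * (α ^ (k+1))⁻¹
          = α * (α ^ k * y * (α ^ k)⁻¹) * α⁻¹ := by
        rw [pow_succ' α k]; group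
      rw [this, ih, ← conj_pow, hy, ← pow_mul]
      ring_nf
  -- periodicity: y^a c depends only on a mod r
  have hper : ∀ a : ℕ, (y ^ a) c = (y ^ (a % r)) c := by
    have hk : ∀ k : ℕ, ((y ^ r) ^ k) c = c := by
      intro k
      induction k with
      | zero => simp
      | succ k ih => rw [pow_succ', Equiv.Perm.mul_apply, ih, hrc]
    intro a
    conv_lhs => rw [← Nat.mod_add_div a r, pow_add, pow_mul]
    rw [Equiv.Perm.mul_apply, hk]
  -- key computation
  have hkey : ∀ u : ℕ, (α ^ d) ((y ^ u) c) = (y ^ (2 ^ d * u + s)) c := by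
    intro u
    have h1 : α ^ d * y ^ u * (α ^ d)⁻¹ = y ^ (2 ^ d * u) := by
      rw [← conj_pow, hconj, ← pow_mul]
    have h2 : (α ^ d) ((y ^ u) c)
        = (α ^ d * y ^ u * (α ^ d)⁻¹) ((α ^ d) c) := by
      simp [Equiv.Perm.mul_apply]
    rw [h2, h1, hdc, ← Equiv.Perm.mul_apply, ← pow_add]
  -- choose u
  set m := 2 ^ d - 1 with hm
  have hm1 : 1 ≤ 2 ^ d := Nat.one_le_two_pow
  have hmm : m + 1 = 2 ^ d := Nat.succ_pred_eq_of_pos hm1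
  have hcop : Nat.Coprime m r := hgcd
  set v : ZMod r := (-(s : ZMod r)) * (m : ZMod r)⁻¹ with hv
  set u : ℕ := v.val + r with hu
  refine ⟨u, le_trans hr (Nat.le_add_left r _), ?_⟩
  have hdvd : r ∣ m * u + s := by
    have : ((m * u + s : ℕ) : ZMod r) = 0 := by
      push_cast
      rw [hu]
      push_cast
      rw [ZMod.natCast_val, ZMod.cast_id, ZMod.natCast_self, add_zero, hv]
      have : (m : ZMod r) * (-(s : ZMod r) * (m : ZMod r)⁻¹)
          = -(s : ZMod r) * ((m : ZMod r) * (m : ZMod r)⁻¹) := by ring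
      rw [this, ZMod.coe_mul_inv_eq_one m hcop]
      ring
    exact (ZMod.natCast_eq_zero_iff _ _).mp this
  have hmod : (2 ^ d * u + s) % r = u % r := by
    have : 2 ^ d * u + s = (m * u + s) + u := by
      rw [← hmm]; ring
    rw [this]
    have h := Nat.ModEq.add_right u ((Nat.modEq_zero_iff_dvd).mpr hdvd)
    rw [zero_add] at h
    exact h
  rw [hkey u, hper (2 ^ d * u + s), hmod, ← hper u]
end

section
/- Let n ≥ 1 and α ∈ Sₙ, let y ∈ Sₙ be a solution of α ∘ y ∘ α⁻¹ = y², and let c ∈ {1,…,n} be such that α(c) = y^s(c) for some integer s ≥ 1 (i.e. α maps the cycle of y through c into itself). Then α has a fixed point: there exists an integer u ≥ 1 with α(y^u(c)) = y^u(c). -/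
/-- If `y` solves `α ∘ y ∘ α⁻¹ = y²` and `α(c) = y^s(c)` for some `s ≥ 1`
(that is, `α` maps the cycle of `y` through `c` into itself), then `α` has a
fixed point on that cycle: there is `u ≥ 1` with `α(y^u(c)) = y^u(c)`. -/
theorem stmt_9 (n : ℕ) (hn : 1 ≤ n) (α y : Equiv.Perm (Fin n))
    (hy : α * y * α⁻¹ = y ^ 2) (c : Fin n) (s : ℕ) (hs : 1 ≤ s)
    (hc : α c = (y ^ s) c) :
    ∃ u : ℕ, 1 ≤ u ∧ α ((y ^ u) c) = (y ^ u) c := by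
  have hconj : ∀ k : ℕ, α * y ^ k * α⁻¹ = y ^ (2 * k) := by
    intro k
    calc α * y ^ k * α⁻¹ = (α * y * α⁻¹) ^ k := by rw [conj_pow]
      _ = (y ^ 2) ^ k := by rw [hy]
      _ = y ^ (2 * k) := by rw [← pow_mul]
  set N := orderOf y with hN
  have hNpos : 0 < N := orderOf_pos y
  rcases eq_or_lt_of_le (show 1 ≤ N from hNpos) with h1 | h2
  · -- N = 1, so y = 1
    have hy1 : y = 1 := orderOf_eq_one_iff.mp h1.symm
    refine ⟨1, le_refl 1, ?_⟩
    simp [hy1] at hc ⊢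
    exact hc
  · -- N ≥ 2
    obtain ⟨m, hm⟩ : ∃ m, N = m + 1 := ⟨N - 1, by omega⟩
    have hmpos : 1 ≤ m := by omega
    refine ⟨s * m, Nat.mul_pos hs hmpos, ?_⟩
    set k := s * m with hk
    have key : α * y ^ k = y ^ (2 * k) * α := mul_inv_eq_iff_eq_mul.mp (hconj k)
    have h2ks : (2 * k + s) = k + s * N := by rw [hk, hm]; ring
    have hsN : y ^ (s * N) = 1 := by
      rw [mul_comm, pow_mul, hN, pow_orderOf_eq_one, one_pow]
    calc α ((y ^ k) c) = (α * y ^ k) c := rfl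
      _ = (y ^ (2 * k) * α) c := by rw [key]
      _ = (y ^ (2 * k)) (α c) := rfl
      _ = (y ^ (2 * k)) ((y ^ s) c) := by rw [hc]
      _ = (y ^ (2 * k + s)) c := by rw [pow_add]; rfl
      _ = (y ^ k) c := by rw [h2ks, pow_add, hsN, mul_one]
end

section
/- Let α ∈ Sₙ have type ⟨g₁, g₂, …, gₙ⟩. Assume that for every choice of integers r = 2m+1 with m ≥ 1 (r odd, r ≥ 3) and d ≥ 1 such that d·r ∈ F_d(α), one has g_d = 0 and gcd(2^d − 1, r) = 1. Then the equation α ∘ y ∘ α⁻¹ = y² has only the trivial solution y = 1. -/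
namespace Stmt10Aux

open Equiv Function Finset

variable {n : ℕ}

lemma mem_periodicPts_perm (β : Equiv.Perm (Fin n)) (z : Fin n) :
    z ∈ Function.periodicPts ⇑β := by
  refine ⟨orderOf β, orderOf_pos β, ?_⟩
  show (⇑β)^[orderOf β] z = z
  rw [← Equiv.Perm.coe_pow, pow_orderOf_eq_one]
  rfl

lemma card_orbit_image (β : Equiv.Perm (Fin n)) (z : Fin n) :
    ((Finset.range (Function.minimalPeriod ⇑β z)).image fun m => (β ^ m) z).card
      = Function.minimalPeriod ⇑β z := by
  rw [Finset.card_image_of_injOn, Finset.card_range]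
  intro a ha b hb hab
  simp only [Finset.coe_range, Set.mem_Iio] at ha hb
  exact Function.iterate_injOn_Iio_minimalPeriod ha hb hab

lemma minimalPeriod_perm_le (β : Equiv.Perm (Fin n)) (z : Fin n) :
    Function.minimalPeriod ⇑β z ≤ n := by
  calc Function.minimalPeriod ⇑β z
      = ((Finset.range (Function.minimalPeriod ⇑β z)).image fun m => (β ^ m) z).card :=
        (card_orbit_image β z).symm
    _ ≤ Fintype.card (Fin n) := Finset.card_le_univ _
    _ = n := Fintype.card_fin n

lemma dvd_card_of_invariant (α : Equiv.Perm (Fin n)) (j : ℕ)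
    (W : Finset (Fin n)) (hinv : ∀ z ∈ W, α z ∈ W)
    (hper : ∀ z ∈ W, Function.minimalPeriod ⇑α z = j) : j ∣ W.card := by
  induction W using Finset.strongInduction with
  | _ W ih =>
    rcases W.eq_empty_or_nonempty with rfl | ⟨z, hz⟩
    · simp
    · have hj : Function.minimalPeriod ⇑α z = j := hper z hz
      have hjpos : 0 < j := hj ▸ Function.minimalPeriod_pos_of_mem_periodicPts
        (mem_periodicPts_perm α z)
      have hmem : ∀ m : ℕ, (α ^ m) z ∈ W := by
        intro m
        induction m with
        | zero => simpa using hz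
        | succ m ihm =>
          rw [pow_succ', Equiv.Perm.mul_apply]
          exact hinv _ ihm
      set Oz : Finset (Fin n) := (Finset.range j).image (fun m => (α ^ m) z) with hOz
      have hOcard : Oz.card = j := by rw [hOz, ← hj]; exact card_orbit_image α z
      have hOsub : Oz ⊆ W := by
        intro w hw
        rw [hOz, Finset.mem_image] at hw
        obtain ⟨m, _, rfl⟩ := hw
        exact hmem m
      have hzO : z ∈ Oz := by
        rw [hOz, Finset.mem_image]
        exact ⟨0, Finset.mem_range.2 hjpos, by simp⟩
      have hfixj : (α ^ j) z = z := by
        have := Function.iterate_minimalPeriod (f := ⇑α) (x := z)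
        rw [hj] at this
        exact this
      have hinv' : ∀ w ∈ W \ Oz, α w ∈ W \ Oz := by
        intro w hw
        rw [Finset.mem_sdiff] at hw ⊢
        refine ⟨hinv w hw.1, ?_⟩
        intro hcon
        apply hw.2
        rw [hOz, Finset.mem_image] at hcon
        obtain ⟨m, hm, hmw⟩ := hcon
        rw [Finset.mem_range] at hm
        rcases Nat.eq_zero_or_pos m with rfl | hmpos
        · -- α w = z = (α ^ j) z
          have : α w = α ((α ^ (j - 1)) z) := by
            rw [← Equiv.Perm.mul_apply, ← pow_succ', Nat.sub_add_cancel hjpos, hfixj]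
            simpa using hmw.symm
          have hw' : w = (α ^ (j - 1)) z := α.injective this
          rw [hOz, Finset.mem_image]
          exact ⟨j - 1, Finset.mem_range.2 (by omega), hw'.symm⟩
        · have : α w = α ((α ^ (m - 1)) z) := by
            rw [← Equiv.Perm.mul_apply, ← pow_succ', Nat.sub_add_cancel hmpos]
            exact hmw.symm
          have hw' : w = (α ^ (m - 1)) z := α.injective this
          rw [hOz, Finset.mem_image]
          exact ⟨m - 1, Finset.mem_range.2 (by omega), hw'.symm⟩
      have hss : W \ Oz ⊂ W := by
        refine Finset.ssubset_iff_of_subset (Finset.sdiff_subset) |>.2 ⟨z, hz, ?_⟩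
        rw [Finset.mem_sdiff]
        tauto
      have hdvd' : j ∣ (W \ Oz).card :=
        ih _ hss hinv' (fun w hw => hper w (Finset.mem_sdiff.1 hw).1)
      have hcard : (W \ Oz).card + Oz.card = W.card :=
        Finset.card_sdiff_add_card_eq_card hOsub
      rw [← hcard, hOcard]
      exact Nat.dvd_add hdvd' dvd_rfl


lemma odd_of_dvd_odd (a b : ℕ) (hab : a ∣ b) (hb : Odd b) : Odd a := by
  rcases Nat.even_or_odd a with he | ho
  · exfalso
    obtain ⟨c, rfl⟩ := hab
    exact (Nat.not_odd_iff_even.2 (he.mul_right c)) hb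
  · exact ho

end Stmt10Aux

open Stmt10Aux Equiv Function Finset

/-- Theorem (A1). Let `α ∈ Sₙ` have type `⟨g₁, …, gₙ⟩` (so `g j * j` points lie on
cycles of `α` of length `j`). If for every odd `r = 2m+1 ≥ 3` and every `d ≥ 1`
with `d·r ∈ F_d(α)` (the `d`-range of `α`, i.e. `d·r` is a sum `Σ q_j·j` over
`j ≤ n` divisible by `d` with `0 ≤ q_j ≤ g_j`) one has `g_d = 0` and
`gcd(2^d - 1, r) = 1`, then `α ∘ y ∘ α⁻¹ = y²` has only the trivial solution. -/
theorem stmt_10 (n : ℕ) (α : Equiv.Perm (Fin n)) (g : ℕ → ℕ)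
    (hg : ∀ j : ℕ,
      (Finset.univ.filter fun x : Fin n => Function.minimalPeriod (⇑α) x = j).card
        = g j * j)
    (h : ∀ r d : ℕ, 3 ≤ r → Odd r → 1 ≤ d →
      (∃ q : ℕ → ℕ, (∀ j, q j ≤ g j) ∧
        d * r = ∑ j ∈ (Finset.range (n + 1)).filter (fun j => d ∣ j), q j * j) →
      g d = 0 ∧ Nat.gcd (2 ^ d - 1) r = 1) :
    ∀ y : Equiv.Perm (Fin n), α * y * α⁻¹ = y ^ 2 → y = 1 := by
  classical
  intro y hceq
  by_contra hy
  obtain ⟨x, hx⟩ : ∃ x, y x ≠ x := by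
    by_contra h'
    push_neg at h'
    exact hy (Equiv.ext fun z => h' z)
  -- conjugation identities
  have hconjn : ∀ m : ℕ, α * y ^ m * α⁻¹ = y ^ (2 * m) := by
    intro m
    have h1 : α * y ^ m * α⁻¹ = (α * y * α⁻¹) ^ m := by
      simpa [MulAut.conj_apply] using (map_pow (MulAut.conj α) y m).symm
    rw [h1, hceq, ← pow_mul]
  have hconjz : ∀ i : ℤ, α * y ^ i * α⁻¹ = y ^ (2 * i) := by
    intro i
    have h1 : α * y ^ i * α⁻¹ = (α * y * α⁻¹) ^ i := by
      simpa [MulAut.conj_apply] using (map_zpow (MulAut.conj α) y i).symm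
    rw [h1, hceq, ← zpow_natCast y 2, ← zpow_mul]
    norm_num
  have hconjk : ∀ k : ℕ, α ^ k * y * (α ^ k)⁻¹ = y ^ (2 ^ k) := by
    intro k
    induction k with
    | zero => simp
    | succ k ih =>
      have e1 : α ^ (k + 1) * y * (α ^ (k + 1))⁻¹
          = α * (α ^ k * y * (α ^ k)⁻¹) * α⁻¹ := by
        group
      rw [e1, ih, hconjn, ← pow_succ']
  -- order facts
  set N := orderOf α with hN
  have hNpos : 0 < N := orderOf_pos α
  have hyN : y ^ (2 ^ N - 1) = 1 := by
    have h2N := hconjk N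
    rw [pow_orderOf_eq_one α] at h2N
    simp only [one_mul, inv_one, mul_one] at h2N
    have : y ^ (2 ^ N - 1) * y = 1 * y := by
      rw [← pow_succ, Nat.sub_add_cancel (Nat.one_le_two_pow), one_mul, ← h2N]
    exact mul_right_cancel this
  have hodd2N : Odd (2 ^ N - 1) := by
    have : Even (2 ^ N) := (Nat.even_pow' (by omega)).2 even_two
    exact Nat.Even.sub_odd Nat.one_le_two_pow this odd_one
  set T := orderOf y with hT
  have hTdvd : T ∣ 2 ^ N - 1 := orderOf_dvd_of_pow_eq_one hyN
  have hTodd : Odd T := odd_of_dvd_odd T _ hTdvd hodd2N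
  have hTpos : 0 < T := orderOf_pos y
  have hyT : y ^ T = 1 := pow_orderOf_eq_one y
  -- minimal period of x under y
  set r := Function.minimalPeriod ⇑y x with hr
  have hxp : x ∈ Function.periodicPts ⇑y := mem_periodicPts_perm y x
  have hrpos : 0 < r := Function.minimalPeriod_pos_of_mem_periodicPts hxp
  have hrdvdT : r ∣ T := by
    apply Function.IsPeriodicPt.minimalPeriod_dvd (n := T)
    show (⇑y)^[T] x = x
    rw [← Equiv.Perm.coe_pow, hyT]
    rfl
  have hrodd : Odd r := odd_of_dvd_odd r T hrdvdT hTodd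
  have hrne1 : r ≠ 1 := by
    intro h1
    exact hx (Function.minimalPeriod_eq_one_iff_isFixedPt.1 (hr ▸ h1))
  have hr3 : 3 ≤ r := by
    obtain ⟨m, hm⟩ := hrodd
    omega
  have hyr : (y ^ r) x = x := by
    have := Function.iterate_minimalPeriod (f := ⇑y) (x := x)
    rw [← hr] at this
    exact this
  have hfixmul : ∀ q : ℕ, (y ^ (r * q)) x = x := by
    intro q
    induction q with
    | zero => simp
    | succ q ih =>
      rw [Nat.mul_succ, pow_add, Equiv.Perm.mul_apply, hyr, ih]
  -- SameCycle transport under α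
  have hmapsC : ∀ a b : Fin n, y.SameCycle a b → y.SameCycle (α a) (α b) := by
    rintro a b ⟨i, hi⟩
    refine ⟨2 * i, ?_⟩
    have := hconjz i
    calc (y ^ (2 * i)) (α a) = (α * y ^ i * α⁻¹) (α a) := by rw [this]
      _ = α ((y ^ i) a) := by simp [Equiv.Perm.mul_apply]
      _ = α b := by rw [hi]
  have hmapsCinv : ∀ a b : Fin n, y.SameCycle (α a) (α b) → y.SameCycle a b := by
    rintro a b ⟨i, hi⟩
    obtain ⟨t, ht⟩ := hTodd
    refine ⟨i * (t + 1), ?_⟩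
    have h2j : y ^ (2 * (i * (t + 1))) = y ^ i := by
      have hTz : (T : ℤ) = 2 * t + 1 := by exact_mod_cast ht
      have e : 2 * (i * (t + 1)) = (T : ℤ) * i + i := by rw [hTz]; ring
      rw [e, zpow_add, zpow_mul, zpow_natCast, hyT, one_zpow, one_mul]
    have := hconjz (i * (t + 1))
    rw [h2j] at this
    have happ : (y ^ (i * (t + 1))) a = (α⁻¹ * y ^ i * α) a := by
      have : y ^ (i * (t+1) : ℤ) = α⁻¹ * y ^ (i : ℤ) * α := by
        rw [← this]; group
      rw [this]
    rw [happ]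
    simp only [Equiv.Perm.mul_apply]
    rw [hi]
    simp
  have hmapsC_pow : ∀ (i : ℕ) (a b : Fin n),
      y.SameCycle a b → y.SameCycle ((α ^ i) a) ((α ^ i) b) := by
    intro i
    induction i with
    | zero => intro a b hab; simpa using hab
    | succ i ih =>
      intro a b hab
      simp only [pow_succ, Equiv.Perm.mul_apply]
      exact ih _ _ (hmapsC a b hab)
  have hmapsCinv_pow : ∀ (i : ℕ) (a b : Fin n),
      y.SameCycle ((α ^ i) a) ((α ^ i) b) → y.SameCycle a b := by
    intro i
    induction i with
    | zero => intro a b hab; simpa using hab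
    | succ i ih =>
      intro a b hab
      simp only [pow_succ, Equiv.Perm.mul_apply] at hab
      exact hmapsCinv _ _ (ih _ _ hab)
  -- classes
  set C : Fin n → Finset (Fin n) :=
    fun z => Finset.univ.filter (fun w => y.SameCycle z w) with hCdef
  have hmemC : ∀ z w, w ∈ C z ↔ y.SameCycle z w := by
    intro z w; simp [hCdef]
  have hC_eq : ∀ a b, y.SameCycle a b → C a = C b := by
    intro a b hab
    ext w
    rw [hmemC, hmemC]
    exact ⟨fun hw => hab.symm.trans hw, fun hw => hab.trans hw⟩
  have himageC : ∀ (i : ℕ) (z : Fin n), (C z).image ⇑(α ^ i) = C ((α ^ i) z) := by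
    intro i z
    ext w
    rw [Finset.mem_image, hmemC]
    constructor
    · rintro ⟨v, hv, rfl⟩
      exact hmapsC_pow i _ _ ((hmemC z v).1 hv)
    · intro hw
      refine ⟨(α ^ i)⁻¹ w, ?_, by simp⟩
      rw [hmemC]
      apply hmapsCinv_pow i
      rw [← Equiv.Perm.mul_apply, mul_inv_cancel, Equiv.Perm.one_apply]
      exact hw
  -- card of class of x
  have hCx : C x = (Finset.range r).image (fun m => (y ^ m) x) := by
    ext w
    rw [hmemC, Finset.mem_image]
    constructor
    · intro hw
      obtain ⟨i, hiT, hi⟩ := Equiv.Perm.SameCycle.exists_pow_eq' hw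
      refine ⟨i % r, Finset.mem_range.2 (Nat.mod_lt _ hrpos), ?_⟩
      have : (y ^ i) x = (y ^ (i % r)) x := by
        conv_lhs => rw [← Nat.mod_add_div i r, pow_add, Equiv.Perm.mul_apply, hfixmul]
      rw [← this, hi]
    · rintro ⟨m, _, rfl⟩
      exact Equiv.Perm.SameCycle.pow_right (Equiv.Perm.SameCycle.refl y x)
  have hCxcard : (C x).card = r := by
    rw [hCx, hr]
    exact card_orbit_image y x
  -- minimal k with α^k x in class of x
  have hex : ∃ k : ℕ, 0 < k ∧ y.SameCycle x ((α ^ k) x) := by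
    refine ⟨N, hNpos, ?_⟩
    rw [hN, pow_orderOf_eq_one]
    exact Equiv.Perm.SameCycle.refl y x
  set k := Nat.find hex with hkdef
  obtain ⟨hkpos, hkx⟩ : 0 < k ∧ y.SameCycle x ((α ^ k) x) := Nat.find_spec hex
  have hkmin : ∀ m, m < k → ¬(0 < m ∧ y.SameCycle x ((α ^ m) x)) :=
    fun m hm => Nat.find_min hex hm
  have hdvd_k : ∀ p : ℕ, y.SameCycle x ((α ^ p) x) → k ∣ p := by
    intro p
    induction p using Nat.strong_induction_on with
    | _ p ih =>
      intro hp
      rcases Nat.lt_or_ge p k with hlt | hge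
      · rcases Nat.eq_zero_or_pos p with rfl | hppos
        · exact dvd_zero k
        · exact absurd ⟨hppos, hp⟩ (hkmin p hlt)
      · have hsc : y.SameCycle x ((α ^ (p - k)) x) := by
          have h1 : y.SameCycle ((α ^ (p - k)) x) ((α ^ (p - k)) ((α ^ k) x)) :=
            hmapsC_pow _ _ _ hkx
          have h2 : (α ^ (p - k)) ((α ^ k) x) = (α ^ p) x := by
            rw [← Equiv.Perm.mul_apply, ← pow_add, Nat.sub_add_cancel hge]
          rw [h2] at h1
          exact hp.trans h1.symm
        have hd : k ∣ (p - k) + k := Nat.dvd_add (ih (p - k) (by omega) hsc) dvd_rfl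
        rwa [Nat.sub_add_cancel hge] at hd
  -- the S_i and U
  set S : ℕ → Finset (Fin n) := fun i => C ((α ^ i) x) with hSdef
  have hScard : ∀ i, (S i).card = r := by
    intro i
    show (C ((α ^ i) x)).card = r
    rw [← himageC i x, Finset.card_image_of_injective _ (Equiv.injective _), hCxcard]
  have hdisj : ∀ i ∈ Finset.range k, ∀ j ∈ Finset.range k, i ≠ j → Disjoint (S i) (S j) := by
    have key : ∀ i j, i < j → j < k → Disjoint (S i) (S j) := by
      intro i j hij hjk
      rw [Finset.disjoint_left]
      intro w hwi hwj
      have h1 : y.SameCycle ((α ^ i) x) w := (hmemC _ _).1 hwi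
      have h2 : y.SameCycle ((α ^ j) x) w := (hmemC _ _).1 hwj
      have h3 : y.SameCycle ((α ^ i) x) ((α ^ j) x) := h1.trans h2.symm
      have h4 : (α ^ j) x = (α ^ i) ((α ^ (j - i)) x) := by
        rw [← Equiv.Perm.mul_apply, ← pow_add, Nat.add_sub_cancel' (le_of_lt hij)]
      rw [h4] at h3
      have h5 : y.SameCycle x ((α ^ (j - i)) x) := hmapsCinv_pow i _ _ h3
      have h6 := hdvd_k _ h5
      have h7 : k ≤ j - i := Nat.le_of_dvd (by omega) h6
      omega
    intro i hi j hj hij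
    rcases Nat.lt_or_ge i j with hlt | hge
    · exact key i j hlt (Finset.mem_range.1 hj)
    · exact (key j i (by omega) (Finset.mem_range.1 hi)).symm
  set U : Finset (Fin n) := (Finset.range k).biUnion S with hUdef
  have hUcard : U.card = k * r := by
    rw [hUdef, Finset.card_biUnion hdisj, Finset.sum_congr rfl (fun i _ => hScard i),
      Finset.sum_const, Finset.card_range, smul_eq_mul]
  have hUinv : ∀ z ∈ U, α z ∈ U := by
    intro z hz
    rw [hUdef, Finset.mem_biUnion] at hz ⊢
    obtain ⟨i, hi, hzi⟩ := hz
    rw [Finset.mem_range] at hi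
    have h1 : y.SameCycle ((α ^ i) x) z := (hmemC _ _).1 hzi
    have h2 : y.SameCycle ((α ^ (i + 1)) x) (α z) := by
      have h2' := hmapsC _ _ h1
      have e : α ((α ^ i) x) = (α ^ (i + 1)) x := by
        rw [pow_succ', Equiv.Perm.mul_apply]
      rwa [e] at h2'
    rcases Nat.lt_or_ge (i + 1) k with hik | hik
    · exact ⟨i + 1, Finset.mem_range.2 hik, (hmemC _ _).2 h2⟩
    · have hik' : i + 1 = k := by omega
      have h3 : y.SameCycle x (α z) := hkx.trans (hik' ▸ h2)
      exact ⟨0, Finset.mem_range.2 hkpos, (hmemC _ _).2 (by simpa using h3)⟩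
  have hUper : ∀ z ∈ U, k ∣ Function.minimalPeriod ⇑α z := by
    intro z hz
    rw [hUdef, Finset.mem_biUnion] at hz
    obtain ⟨i, hi, hzi⟩ := hz
    set p := Function.minimalPeriod ⇑α z with hp
    have hploop : (α ^ p) z = z := by
      have hploop' := Function.iterate_minimalPeriod (f := ⇑α) (x := z)
      rw [← hp] at hploop'
      exact hploop'
    have h1 : y.SameCycle ((α ^ i) x) z := (hmemC _ _).1 hzi
    have h2 : y.SameCycle ((α ^ p) ((α ^ i) x)) z := by
      have h2' := hmapsC_pow p _ _ h1
      rwa [hploop] at h2'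
    have h3 : (α ^ p) ((α ^ i) x) = (α ^ i) ((α ^ p) x) := by
      rw [← Equiv.Perm.mul_apply, ← Equiv.Perm.mul_apply, ← pow_add, ← pow_add, Nat.add_comm]
    have h4 : y.SameCycle ((α ^ i) ((α ^ p) x)) ((α ^ i) x) := by
      rw [← h3]
      exact h2.trans h1.symm
    have h5 : y.SameCycle x ((α ^ p) x) := (hmapsCinv_pow i _ _ h4).symm
    exact hdvd_k p h5
  -- counting
  set c : ℕ → ℕ :=
    fun j => (U.filter (fun z => Function.minimalPeriod ⇑α z = j)).card with hcdef
  have hcdvd : ∀ j, j ∣ c j := by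
    intro j
    apply dvd_card_of_invariant α j
    · intro z hz
      rw [Finset.mem_filter] at hz ⊢
      refine ⟨hUinv z hz.1, ?_⟩
      rw [Function.minimalPeriod_apply (mem_periodicPts_perm α z)]
      exact hz.2
    · intro z hz
      exact (Finset.mem_filter.1 hz).2
  have hc0 : c 0 = 0 := Nat.eq_zero_of_zero_dvd (hcdvd 0)
  have hcle : ∀ j, c j ≤ g j * j := by
    intro j
    rw [← hg j]
    exact Finset.card_le_card (Finset.filter_subset_filter _ (Finset.subset_univ U))
  set q : ℕ → ℕ := fun j => c j / j with hqdef
  have hqle : ∀ j, q j ≤ g j := by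
    intro j
    rcases Nat.eq_zero_or_pos j with rfl | hj
    · show c 0 / 0 ≤ g 0
      simp
    · have h' : c j / j ≤ g j * j / j := Nat.div_le_div_right (hcle j)
      rwa [Nat.mul_div_cancel _ hj] at h'
  have hqj : ∀ j, q j * j = c j := by
    intro j
    rcases Nat.eq_zero_or_pos j with rfl | hj
    · show c 0 / 0 * 0 = c 0
      simp [hc0]
    · exact Nat.div_mul_cancel (hcdvd j)
  have hsum : k * r = ∑ j ∈ (Finset.range (n + 1)).filter (fun j => k ∣ j), q j * j := by
    have hA : ∑ j ∈ (Finset.range (n + 1)).filter (fun j => k ∣ j), q j * j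
        = ∑ j ∈ (Finset.range (n + 1)).filter (fun j => k ∣ j), c j :=
      Finset.sum_congr rfl (fun j _ => hqj j)
    have hB : ∑ j ∈ (Finset.range (n + 1)).filter (fun j => k ∣ j), c j
        = ∑ j ∈ Finset.range (n + 1), c j := by
      apply Finset.sum_subset (Finset.filter_subset _ _)
      intro j hj hnot
      have hkj : ¬ k ∣ j := by
        intro hd
        exact hnot (Finset.mem_filter.2 ⟨hj, hd⟩)
      show (U.filter (fun z => Function.minimalPeriod ⇑α z = j)).card = 0
      rw [Finset.card_eq_zero]
      apply Finset.eq_empty_of_forall_notMem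
      intro z hz
      rw [Finset.mem_filter] at hz
      exact hkj (hz.2 ▸ hUper z hz.1)
    have hCeq : ∑ j ∈ Finset.range (n + 1), c j = U.card :=
      (Finset.card_eq_sum_card_fiberwise (fun z _ => Finset.mem_range.2
        (Nat.lt_succ_of_le (minimalPeriod_perm_le α z)))).symm
    rw [hA, hB, hCeq, hUcard]
  obtain ⟨hgk, hgcd⟩ := h r k hr3 hrodd hkpos ⟨q, hqle, hsum⟩
  -- fixed point construction
  obtain ⟨s, hs⟩ : ∃ s, 2 ^ k = s + 1 := ⟨2 ^ k - 1, (Nat.sub_add_cancel Nat.one_le_two_pow).symm⟩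
  have hβ : ∀ (m : ℕ) (w : Fin n),
      (α ^ k) ((y ^ m) w) = (y ^ (2 ^ k * m)) ((α ^ k) w) := by
    intro m w
    have h1 : α ^ k * y ^ m * (α ^ k)⁻¹ = y ^ (2 ^ k * m) := by
      have h0 : α ^ k * y ^ m * (α ^ k)⁻¹ = (α ^ k * y * (α ^ k)⁻¹) ^ m := by
        simpa [MulAut.conj_apply] using (map_pow (MulAut.conj (α ^ k)) y m).symm
      calc α ^ k * y ^ m * (α ^ k)⁻¹ = (α ^ k * y * (α ^ k)⁻¹) ^ m := h0
        _ = (y ^ 2 ^ k) ^ m := by rw [hconjk k]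
        _ = y ^ (2 ^ k * m) := by rw [← pow_mul]
    calc (α ^ k) ((y ^ m) w) = (α ^ k * y ^ m * (α ^ k)⁻¹) ((α ^ k) w) := by
          simp [Equiv.Perm.mul_apply]
      _ = (y ^ (2 ^ k * m)) ((α ^ k) w) := by rw [h1]
  obtain ⟨b, hbT, hb⟩ := Equiv.Perm.SameCycle.exists_pow_eq' hkx
  haveI : NeZero r := ⟨by omega⟩
  have hsg : Nat.Coprime s r := by
    have hse : s = 2 ^ k - 1 := by omega
    rw [Nat.Coprime, hse]
    exact hgcd
  have hunit : IsUnit ((s : ℕ) : ZMod r) := (ZMod.isUnit_iff_coprime _ _).2 hsg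
  set u : ZMod r := (-(b : ZMod r)) * ((s : ℕ) : ZMod r)⁻¹ with hudef
  set m : ℕ := u.val with hmdef
  have hcast : ((s * m + b : ℕ) : ZMod r) = 0 := by
    push_cast
    rw [hmdef, ZMod.natCast_zmod_val, hudef]
    have h1 : (s : ZMod r) * (-(b : ZMod r) * ((s : ZMod r))⁻¹)
        = -(b : ZMod r) * ((s : ZMod r) * ((s : ZMod r))⁻¹) := by ring
    rw [h1, ZMod.mul_inv_of_unit _ hunit, mul_one]
    ring
  obtain ⟨t2, ht2⟩ : r ∣ s * m + b := (ZMod.natCast_eq_zero_iff _ _).1 hcast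
  set z : Fin n := (y ^ m) x with hzdef
  have hzfix : (α ^ k) z = z := by
    rw [hzdef, hβ m x, ← hb, ← Equiv.Perm.mul_apply, ← pow_add]
    have harith : 2 ^ k * m + b = m + r * t2 := by
      rw [hs, ← ht2]
      ring
    rw [harith, pow_add, Equiv.Perm.mul_apply, hfixmul]
  have hzU : z ∈ U := by
    rw [hUdef, Finset.mem_biUnion]
    refine ⟨0, Finset.mem_range.2 hkpos, (hmemC _ _).2 ?_⟩
    have hxz : y.SameCycle x z := ⟨(m : ℤ), by rw [zpow_natCast, hzdef]⟩
    simpa using hxz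
  have hzper : Function.minimalPeriod ⇑α z = k := by
    apply Nat.dvd_antisymm
    · apply Function.IsPeriodicPt.minimalPeriod_dvd
      show (⇑α)^[k] z = z
      rw [← Equiv.Perm.coe_pow]
      exact hzfix
    · exact hUper z hzU
  have hpos : 0 < (Finset.univ.filter fun w : Fin n =>
      Function.minimalPeriod (⇑α) w = k).card :=
    Finset.card_pos.2 ⟨z, Finset.mem_filter.2 ⟨Finset.mem_univ z, hzper⟩⟩
  rw [hg k, hgk, zero_mul] at hpos
  exact lt_irrefl 0 hpos
end

section
/- Let α ∈ Sₙ have type ⟨g₁, g₂, …, gₙ⟩ and assume: g₁ = 0 (α has no fixed points); any two distinct cycle lengths of α are relatively prime (g_a ≠ 0, g_b ≠ 0 and a ≠ b imply gcd(a,b) = 1); every cycle length occurs at most twice (g_a ≠ 0 implies 1 ≤ g_a ≤ 2); and for every cycle length a (g_a ≠ 0) and every prime divisor p ≥ 3 of a, the number 2^{a/p} − 1 is not divisible by p. Then the equation α ∘ y ∘ α⁻¹ = y² has only the trivial solution y = 1. -/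
open Function

private lemma aux_main {n : ℕ} (α z : Equiv.Perm (Fin n)) (q : ℕ)
    (hq : q.Prime) (hq3 : 3 ≤ q) (hzq : z ^ q = 1) (b : Fin n) (hb : z b ≠ b)
    (hconj : α * z * α⁻¹ = z ^ 2)
    (g : ℕ → ℕ)
    (hg : ∀ j : ℕ,
      (Finset.univ.filter fun x : Fin n => Function.minimalPeriod (⇑α) x = j).card
        = g j * j)
    (hg1 : g 1 = 0)
    (hcop : ∀ a b : ℕ, 1 ≤ a → 1 ≤ b → g a ≠ 0 → g b ≠ 0 → a ≠ b → Nat.gcd a b = 1)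
    (hle : ∀ a : ℕ, 1 ≤ a → g a ≠ 0 → g a ≤ 2)
    (hnd : ∀ a : ℕ, 1 ≤ a → g a ≠ 0 →
      ∀ p : ℕ, p.Prime → 3 ≤ p → p ∣ a → ¬ p ∣ 2 ^ (a / p) - 1) : False := by
  haveI : NeZero q := ⟨by omega⟩
  haveI : Fact q.Prime := ⟨hq⟩
  -- commutation relations
  have hc1 : α * z = z ^ 2 * α := by
    have := hconj
    rw [mul_inv_eq_iff_eq_mul] at this
    exact this
  have hck : ∀ k : ℕ, α * z ^ k = z ^ (2 * k) * α := by
    intro k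
    induction k with
    | zero => simp
    | succ k ih =>
      have : α * z ^ (k + 1) = (α * z ^ k) * z := by rw [pow_succ, mul_assoc]
      rw [this, ih, mul_assoc, hc1, ← mul_assoc, ← pow_add]
      ring_nf
  have hkey : ∀ t k : ℕ, α ^ t * z ^ k = z ^ (2 ^ t * k) * α ^ t := by
    intro t
    induction t with
    | zero => intro k; simp
    | succ t ih =>
      intro k
      have h1 : α ^ (t + 1) * z ^ k = α ^ t * (α * z ^ k) := by
        rw [pow_succ, mul_assoc]
      rw [h1, hck k, ← mul_assoc, ih (2 * k), mul_assoc]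
      rw [← pow_succ]
      congr 2
      ring
  have hpt : ∀ (t k : ℕ) (w : Fin n),
      (α ^ t) ((z ^ k) w) = (z ^ (2 ^ t * k)) ((α ^ t) w) := by
    intro t k w
    have := congrArg (fun p : Equiv.Perm (Fin n) => p w) (hkey t k)
    simpa using this
  -- reduction of exponents of z
  have hzred : ∀ k : ℕ, z ^ k = z ^ (k % q) := by
    intro k
    conv_lhs => rw [← Nat.div_add_mod k q]
    rw [pow_add, pow_mul, hzq, one_pow, one_mul]
  have hzval : ∀ k : ℕ, z ^ k = z ^ ((k : ZMod q)).val := by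
    intro k; rw [ZMod.val_natCast]; exact hzred k
  have hzcancel : ∀ (K : ℕ) (w : Fin n), (z ^ (q - K % q)) ((z ^ K) w) = w := by
    intro K w
    have hd := Nat.div_add_mod K q
    have hm : K % q < q := Nat.mod_lt _ (by omega)
    have he : q - K % q + K = q + q * (K / q) := by omega
    have : (z ^ (q - K % q)) * z ^ K = 1 := by
      rw [← pow_add, he, pow_add, hzq, pow_mul, hzq, one_pow, one_mul]
    calc (z ^ (q - K % q)) ((z ^ K) w) = ((z ^ (q - K % q)) * z ^ K) w := rfl
      _ = w := by rw [this]; rfl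
  -- injectivity of i ↦ z^i b on ZMod q
  have hzperiod : ∀ k : ℕ, (z ^ k) b = b → q ∣ k := by
    intro k hk
    have hq_per : IsPeriodicPt (⇑z) q b := by
      show (⇑z)^[q] b = b
      rw [Equiv.Perm.iterate_eq_pow, hzq]; rfl
    have hmp_dvd := hq_per.minimalPeriod_dvd
    have hmp_pos : 0 < minimalPeriod (⇑z) b :=
      IsPeriodicPt.minimalPeriod_pos (by omega) hq_per
    have hmp_ne1 : minimalPeriod (⇑z) b ≠ 1 := by
      intro h1
      have := isPeriodicPt_minimalPeriod (⇑z) b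
      rw [h1] at this
      exact hb this
    have hmpq : minimalPeriod (⇑z) b = q :=
      ((Nat.Prime.eq_one_or_self_of_dvd hq _ hmp_dvd).resolve_left hmp_ne1)
    have hper : IsPeriodicPt (⇑z) k b := by
      show (⇑z)^[k] b = b
      rw [Equiv.Perm.iterate_eq_pow]; exact hk
    have := hper.minimalPeriod_dvd
    rwa [hmpq] at this
  have hcastval : ∀ i : ZMod q, ((i.val : ℕ) : ZMod q) = i := fun i => ZMod.natCast_rightInverse i
  have hinj : ∀ i j : ZMod q, (z ^ i.val) b = (z ^ j.val) b → i = j := by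
    intro i j hij
    have h1 : (z ^ (q - j.val)) ((z ^ j.val) b) = b := by
      have := hzcancel j.val b
      rwa [Nat.mod_eq_of_lt (ZMod.val_lt j)] at this
    have h3 : (z ^ (q - j.val + i.val)) b = b := by
      rw [pow_add]
      show (z ^ (q - j.val)) ((z ^ i.val) b) = b
      rw [hij]; exact h1
    have h4 : q ∣ (q - j.val + i.val) := hzperiod _ h3
    have h5 : ((q - j.val + i.val : ℕ) : ZMod q) = 0 :=
      (ZMod.natCast_eq_zero_iff _ _).mpr h4
    have hjq : j.val ≤ q := le_of_lt (ZMod.val_lt j)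
    rw [Nat.cast_add, Nat.cast_sub hjq] at h5
    rw [hcastval i, hcastval j] at h5
    rw [ZMod.natCast_self] at h5
    have : -j + i = 0 := by rw [← h5]; ring
    linear_combination this
  -- the return time s
  have hTex : ∃ t, 0 < t ∧ ∃ j : ZMod q, (α ^ t) b = (z ^ j.val) b := by
    refine ⟨orderOf α, orderOf_pos α, 0, ?_⟩
    rw [pow_orderOf_eq_one]
    simp
  set s := Nat.find hTex with hs_def
  obtain ⟨hspos, c, hsc⟩ := Nat.find_spec hTex
  have hsmin : ∀ t, 0 < t → t < s → ∀ j : ZMod q, (α ^ t) b ≠ (z ^ j.val) b := by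
    intro t ht hts j hj
    exact Nat.find_min hTex hts ⟨ht, j, hj⟩
  set a : ZMod q := ((2 ^ s : ℕ) : ZMod q) with ha_def
  set f : ZMod q → ZMod q := fun j => a * j + c with hf_def
  have hstep : ∀ N : ℕ, (z ^ N) b = (z ^ ((N : ZMod q)).val) b := by
    intro N; rw [← hzval]
  have hx : ∀ j : ZMod q, (α ^ s) ((z ^ j.val) b) = (z ^ (f j).val) b := by
    intro j
    rw [hpt s j.val b, hsc]
    have h1 : (z ^ (2 ^ s * j.val)) ((z ^ c.val) b) = (z ^ (2 ^ s * j.val + c.val)) b := by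
      rw [pow_add]; rfl
    rw [h1, hstep]
    have hcast : ((2 ^ s * j.val + c.val : ℕ) : ZMod q) = f j := by
      simp only [hf_def, ha_def]
      push_cast [hcastval]
      ring
    rw [hcast]
  have hiter : ∀ (u : ℕ) (j : ZMod q),
      (α ^ (u * s)) ((z ^ j.val) b) = (z ^ (f^[u] j).val) b := by
    intro u
    induction u with
    | zero => intro j; simp
    | succ u ih =>
      intro j
      have h1 : α ^ ((u + 1) * s) = α ^ (u * s) * α ^ s := by
        rw [← pow_add]; congr 1; ring
      rw [h1]
      show (α ^ (u * s)) ((α ^ s) ((z ^ j.val) b)) = _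
      rw [hx j, ih (f j), Function.iterate_succ_apply]
  have h2ne : (2 : ZMod q) ≠ 0 := by
    intro h
    have : ((2 : ℕ) : ZMod q) = 0 := by push_cast; exact h
    rw [ZMod.natCast_eq_zero_iff] at this
    have := Nat.le_of_dvd (by norm_num) this
    omega
  have ha0 : a ≠ 0 := by
    rw [ha_def]; push_cast
    exact pow_ne_zero s h2ne
  have hfinj : Function.Injective f := by
    intro u v huv
    simp only [hf_def] at huv
    have := add_right_cancel huv
    exact mul_left_cancel₀ ha0 this
  have hfbij : Function.Bijective f := Finite.injective_iff_bijective.mp hfinj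
  have hTof : ∀ (t : ℕ) (i j : ZMod q), (α ^ t) ((z ^ i.val) b) = (z ^ j.val) b →
      ∃ j' : ZMod q, (α ^ t) b = (z ^ j'.val) b := by
    intro t i j h
    rw [hpt] at h
    set K := 2 ^ t * i.val with hK
    have h2 : (α ^ t) b = (z ^ (q - K % q)) ((z ^ j.val) b) := by
      rw [← h, hzcancel]
    refine ⟨(((q - K % q) + j.val : ℕ) : ZMod q), ?_⟩
    have h3 : (z ^ (q - K % q)) ((z ^ j.val) b) = (z ^ (q - K % q + j.val)) b := by
      rw [pow_add]; rfl
    rw [h2, h3, hstep]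
  have hTdvd : ∀ t : ℕ, (∃ j : ZMod q, (α ^ t) b = (z ^ j.val) b) → s ∣ t := by
    rintro t ⟨j, hj⟩
    have hdm := Nat.div_add_mod t s
    set u := t / s with hu
    set v := t % s with hv
    have hvs : v < s := Nat.mod_lt _ hspos
    obtain ⟨j0, hj0⟩ := (hfbij.iterate u).surjective j
    have h1 : (α ^ (u * s)) ((z ^ j0.val) b) = (z ^ j.val) b := by rw [hiter, hj0]
    have h2 : (α ^ (u * s)) ((α ^ v) b) = (z ^ j.val) b := by
      rw [← Equiv.Perm.mul_apply, ← pow_add]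
      have : u * s + v = t := by rw [mul_comm]; omega
      rw [this]; exact hj
    have h3 : (α ^ v) b = (z ^ j0.val) b := (α ^ (u * s)).injective (h2.trans h1.symm)
    rcases Nat.eq_zero_or_pos v with h0 | h0
    · exact ⟨u, by omega⟩
    · exact absurd h3 (hsmin v h0 hvs j0)
  -- the minimal period formula
  have hmp : ∀ (j : ZMod q) (r : ℕ), 0 < r → f^[r] j = j →
      (∀ u, 0 < u → u < r → f^[u] j ≠ j) →
      minimalPeriod (⇑α) ((z ^ j.val) b) = s * r := by
    intro j r hr hfr hmin
    set x := (z ^ j.val) b with hxdef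
    have hper : IsPeriodicPt (⇑α) (s * r) x := by
      show (⇑α)^[s * r] x = x
      rw [Equiv.Perm.iterate_eq_pow, mul_comm s r, hxdef, hiter, hfr]
    have hsr : 0 < s * r := Nat.mul_pos hspos hr
    have hle1 : minimalPeriod (⇑α) x ≤ s * r := hper.minimalPeriod_le hsr
    set m0 := minimalPeriod (⇑α) x with hm0def
    have hm0pos : 0 < m0 := IsPeriodicPt.minimalPeriod_pos hsr hper
    have hm0 : (α ^ m0) x = x := by
      have := isPeriodicPt_minimalPeriod (⇑α) x
      rwa [IsPeriodicPt, IsFixedPt, Equiv.Perm.iterate_eq_pow] at this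
    have hsm0 : s ∣ m0 := hTdvd m0 (hTof m0 j j hm0)
    obtain ⟨u, hu⟩ := hsm0
    have hupos : 0 < u := by
      rcases Nat.eq_zero_or_pos u with h0 | h0
      · subst h0; simp at hu; omega
      · exact h0
    have h1 : (α ^ (u * s)) x = x := by rw [mul_comm u s, ← hu]; exact hm0
    have h2 : f^[u] j = j := by
      apply hinj
      rw [← hiter u j]
      exact h1
    have hur : r ≤ u := by
      by_contra hlt
      exact hmin u hupos (by omega) h2
    have : s * r ≤ m0 := by
      rw [hu]
      exact Nat.mul_le_mul_left s hur
    exact le_antisymm hle1 this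
  have hgne : ∀ x : Fin n, g (minimalPeriod (⇑α) x) ≠ 0 := by
    intro x hzero
    have hcard := hg (minimalPeriod (⇑α) x)
    rw [hzero, zero_mul, Finset.card_eq_zero] at hcard
    have hx : x ∈ Finset.univ.filter
        fun w : Fin n => Function.minimalPeriod (⇑α) w = minimalPeriod (⇑α) x :=
      Finset.mem_filter.mpr ⟨Finset.mem_univ x, rfl⟩
    rw [hcard] at hx
    exact absurd hx (Finset.notMem_empty x)
  by_cases ha : a = 1
  · by_cases hc : c = 0
    · -- Case A : α^s fixes all of B pointwise → g s ≥ q ≥ 3, contradicting hle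
      have hfid : ∀ j : ZMod q, f j = j := by
        intro j; simp [hf_def, ha, hc]
      have hmpA : ∀ j : ZMod q, minimalPeriod (⇑α) ((z ^ j.val) b) = s := by
        intro j
        have := hmp j 1 one_pos (by simp [hfid]) (by intro u h1 h2; omega)
        simpa using this
      set F : ℕ × ZMod q → Fin n := fun p => (α ^ p.1) ((z ^ p.2.val) b) with hF
      set D : Finset (ℕ × ZMod q) := Finset.range s ×ˢ (Finset.univ : Finset (ZMod q))
        with hD
      have key : ∀ (t t' : ℕ) (i i' : ZMod q), t ≤ t' → t' < s →
          (α ^ t) ((z ^ i.val) b) = (α ^ t') ((z ^ i'.val) b) → t = t' ∧ i = i' := by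
        intro t t' i i' hle' hlt heq
        have hsplit : α ^ t' = α ^ t * α ^ (t' - t) := by
          rw [← pow_add]; congr 1; omega
        rw [hsplit] at heq
        have heq2 : (z ^ i.val) b = (α ^ (t' - t)) ((z ^ i'.val) b) :=
          (α ^ t).injective heq
        rcases Nat.eq_zero_or_pos (t' - t) with h0 | h0
        · rw [h0, pow_zero] at heq2
          refine ⟨by omega, hinj i i' (by simpa using heq2)⟩
        · exfalso
          obtain ⟨j', hj'⟩ := hTof (t' - t) i' i heq2.symm
          exact hsmin (t' - t) h0 (by omega) j' hj'
      have hFinj : Set.InjOn F ↑D := by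
        rintro ⟨t, i⟩ hti ⟨t', i'⟩ hti' heq
        simp only [hD, Finset.coe_product, Set.mem_prod, Finset.mem_coe,
          Finset.mem_range] at hti hti'
        rcases le_total t t' with h | h
        · obtain ⟨h1, h2⟩ := key t t' i i' h hti'.1 heq
          simp [h1, h2]
        · obtain ⟨h1, h2⟩ := key t' t i' i h hti.1 heq.symm
          simp [h1, h2]
      have himg : ∀ p ∈ D, F p ∈ Finset.univ.filter
          fun x : Fin n => Function.minimalPeriod (⇑α) x = s := by
        rintro ⟨t, i⟩ hti
        refine Finset.mem_filter.mpr ⟨Finset.mem_univ _, ?_⟩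
        have hper : (z ^ i.val) b ∈ periodicPts (⇑α) := by
          refine ⟨s, hspos, ?_⟩
          show (⇑α)^[s] _ = _
          rw [Equiv.Perm.iterate_eq_pow]
          have := hiter 1 i
          simpa [hfid] using this
        have : F (t, i) = (⇑α)^[t] ((z ^ i.val) b) := by
          rw [Equiv.Perm.iterate_eq_pow]
        rw [this, minimalPeriod_apply_iterate hper t]
        exact hmpA i
      have hcard : s * q ≤ g s * s := by
        calc s * q = D.card := by
              simp [hD, Finset.card_product, ZMod.card]
          _ = (D.image F).card := (Finset.card_image_of_injOn hFinj).symm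
          _ ≤ (Finset.univ.filter
                fun x : Fin n => Function.minimalPeriod (⇑α) x = s).card := by
              apply Finset.card_le_card
              intro x hx
              obtain ⟨p, hp, rfl⟩ := Finset.mem_image.mp hx
              exact himg p hp
          _ = g s * s := hg s
      have hqgs : q ≤ g s := by
        have : q * s ≤ g s * s := by rw [mul_comm q s]; exact hcard
        exact Nat.le_of_mul_le_mul_right this hspos
      have hgs : g s ≠ 0 := by omega
      have := hle s hspos hgs
      omega
    · -- Case B : a = 1, c ≠ 0 → one cycle of length s*q, contradicting hnd
      have hfu : ∀ u : ℕ, f^[u] 0 = (u : ZMod q) * c := by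
        intro u
        induction u with
        | zero => simp
        | succ u ih =>
          rw [Function.iterate_succ_apply', ih]
          simp only [hf_def, ha]
          push_cast
          ring
      have hmpB : minimalPeriod (⇑α) ((z ^ (0 : ZMod q).val) b) = s * q := by
        refine hmp 0 q (by omega) ?_ ?_
        · rw [hfu, ZMod.natCast_self, zero_mul]
        · intro u hu huq heq
          rw [hfu] at heq
          rcases mul_eq_zero.mp heq with h | h
          · rw [ZMod.natCast_eq_zero_iff] at h
            have := Nat.le_of_dvd hu h
            omega
          · exact hc h
      have hgq : g (s * q) ≠ 0 := by
        have := hgne ((z ^ (0 : ZMod q).val) b)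
        rwa [hmpB] at this
      have hnd' := hnd (s * q) (Nat.mul_pos hspos (by omega)) hgq q hq hq3
        ⟨s, mul_comm s q⟩
      rw [Nat.mul_div_cancel s (by omega : 0 < q)] at hnd'
      apply hnd'
      have h2s : ((2 ^ s : ℕ) : ZMod q) = 1 := ha
      have hcast0 : ((2 ^ s - 1 : ℕ) : ZMod q) = 0 := by
        rw [Nat.cast_sub Nat.one_le_two_pow, h2s, Nat.cast_one, sub_self]
      exact (ZMod.natCast_eq_zero_iff _ _).mp hcast0
  · -- Case C : a ≠ 1
    set i₀ : ZMod q := c * (1 - a)⁻¹ with hi0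
    have h1a : (1 : ZMod q) - a ≠ 0 := sub_ne_zero.mpr (Ne.symm ha)
    have hfix : f i₀ = i₀ := by
      simp only [hf_def, hi0]
      field_simp
      ring
    have hmps : minimalPeriod (⇑α) ((z ^ i₀.val) b) = s := by
      have := hmp i₀ 1 one_pos (by simp [hfix]) (by intro u h1 h2; omega)
      simpa using this
    have hgs : g s ≠ 0 := by
      have := hgne ((z ^ i₀.val) b)
      rwa [hmps] at this
    by_cases hs1 : s = 1
    · rw [hs1] at hgs
      exact hgs hg1
    · have hs2 : 2 ≤ s := by omega
      have hfiter : ∀ u : ℕ, f^[u] (i₀ + 1) = i₀ + a ^ u := by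
        intro u
        induction u with
        | zero => simp
        | succ u ih =>
          rw [Function.iterate_succ_apply', ih]
          simp only [hf_def]
          have := hfix
          simp only [hf_def] at this
          calc a * (i₀ + a ^ u) + c = (a * i₀ + c) + a ^ (u + 1) := by ring
            _ = i₀ + a ^ (u + 1) := by rw [this]
      have h2ne' : (2 : ZMod q) ≠ 0 := h2ne
      have ha0' : a ≠ 0 := ha0
      have hex : ∃ u, 0 < u ∧ a ^ u = 1 :=
        ⟨q - 1, by omega, ZMod.pow_card_sub_one_eq_one ha0'⟩
      set r := Nat.find hex with hr_def
      obtain ⟨hrpos, hr1⟩ := Nat.find_spec hex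
      have hrmin : ∀ u, 0 < u → u < r → a ^ u ≠ 1 := by
        intro u h1 h2 h3
        exact Nat.find_min hex h2 ⟨h1, h3⟩
      have hr2 : 2 ≤ r := by
        by_contra h
        have hr1' : r = 1 := by omega
        have hx1 : a ^ r = 1 := hr1
        rw [hr1', pow_one] at hx1
        exact ha hx1
      have hmpr : minimalPeriod (⇑α) ((z ^ (i₀ + 1).val) b) = s * r := by
        refine hmp (i₀ + 1) r hrpos ?_ ?_
        · rw [hfiter, hr1]
        · intro u hu hur heq
          rw [hfiter] at heq
          have : a ^ u = 1 := by
            have := add_left_cancel heq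
            exact this
          exact hrmin u hu hur this
      have hgsr : g (s * r) ≠ 0 := by
        have := hgne ((z ^ (i₀ + 1).val) b)
        rwa [hmpr] at this
      have hssr : s ≠ s * r := by
        have : s < s * r := (Nat.lt_mul_iff_one_lt_right hspos).mpr (by omega)
        omega
      have hgcd := hcop s (s * r) (by omega) (by nlinarith) hgs hgsr hssr
      have hdvd : s ∣ Nat.gcd s (s * r) := Nat.dvd_gcd dvd_rfl ⟨r, rfl⟩
      rw [hgcd] at hdvd
      have := Nat.le_of_dvd one_pos hdvd
      omega

/-- Theorem (A2). Let `α ∈ Sₙ` have type `⟨g₁, …, gₙ⟩` (so `g j * j` points lie on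
cycles of `α` of length `j`). Assume `g₁ = 0`, any two distinct cycle lengths of
`α` are relatively prime, every cycle length occurs at most twice, and for every
cycle length `a` and every prime `p ≥ 3` dividing `a` the number `2^{a/p} - 1` is
not divisible by `p`. Then `α ∘ y ∘ α⁻¹ = y²` has only the trivial solution. -/
theorem stmt_11 (n : ℕ) (α : Equiv.Perm (Fin n)) (g : ℕ → ℕ)
    (hg : ∀ j : ℕ,
      (Finset.univ.filter fun x : Fin n => Function.minimalPeriod (⇑α) x = j).card
        = g j * j)
    (hg1 : g 1 = 0)
    (hcop : ∀ a b : ℕ, 1 ≤ a → 1 ≤ b → g a ≠ 0 → g b ≠ 0 → a ≠ b → Nat.gcd a b = 1)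
    (hle : ∀ a : ℕ, 1 ≤ a → g a ≠ 0 → g a ≤ 2)
    (hnd : ∀ a : ℕ, 1 ≤ a → g a ≠ 0 →
      ∀ p : ℕ, p.Prime → 3 ≤ p → p ∣ a → ¬ p ∣ 2 ^ (a / p) - 1) :
    ∀ y : Equiv.Perm (Fin n), α * y * α⁻¹ = y ^ 2 → y = 1 := by
  intro y hy
  by_contra hy1
  have hm : 0 < orderOf α := orderOf_pos α
  have hconjk : ∀ k : ℕ, α * y ^ k * α⁻¹ = y ^ (2 * k) := by
    intro k
    have h1 : α * y ^ k * α⁻¹ = (α * y * α⁻¹) ^ k := by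
      simp [mul_pow, ← mul_assoc]
    rw [h1, hy, ← pow_mul]
  have hpowt : ∀ t : ℕ, α ^ t * y * (α ^ t)⁻¹ = y ^ (2 ^ t) := by
    intro t
    induction t with
    | zero => simp
    | succ t ih =>
      have h1 : α ^ (t + 1) = α * α ^ t := by rw [pow_succ']
      rw [h1, mul_inv_rev]
      calc α * α ^ t * y * ((α ^ t)⁻¹ * α⁻¹)
          = α * (α ^ t * y * (α ^ t)⁻¹) * α⁻¹ := by group
        _ = α * y ^ (2 ^ t) * α⁻¹ := by rw [ih]
        _ = y ^ (2 * 2 ^ t) := hconjk (2 ^ t)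
        _ = y ^ (2 ^ (t + 1)) := by rw [← pow_succ']
  set m := orderOf α with hmdef
  have hym : y ^ (2 ^ m) = y := by
    have := hpowt m
    rw [pow_orderOf_eq_one] at this
    simpa using this.symm
  have h2m : 1 ≤ 2 ^ m := Nat.one_le_two_pow
  have hyd : y ^ (2 ^ m - 1) = 1 := by
    have h1 : y ^ (2 ^ m - 1) * y = y := by
      rw [← pow_succ, Nat.sub_add_cancel h2m, hym]
    have h2 : y ^ (2 ^ m - 1) * y = 1 * y := by rw [h1, one_mul]
    exact mul_right_cancel h2
  set d := orderOf y with hddef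
  have hd1 : d ≠ 1 := fun h => hy1 (orderOf_eq_one_iff.mp h)
  have hd0 : 0 < d := orderOf_pos y
  have hddvd : d ∣ 2 ^ m - 1 := orderOf_dvd_of_pow_eq_one hyd
  set q := d.minFac with hqdef
  have hq : q.Prime := Nat.minFac_prime hd1
  have hqd : q ∣ d := Nat.minFac_dvd d
  have hq2 : q ≠ 2 := by
    intro h
    have h2 : q ∣ 2 ^ m - 1 := hqd.trans hddvd
    rw [h] at h2
    have h3 : 2 ∣ 2 ^ m := dvd_pow_self 2 hm.ne'
    obtain ⟨u, hu⟩ := h2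
    obtain ⟨v, hv⟩ := h3
    omega
  have hq3 : 3 ≤ q := by have := hq.two_le; omega
  set z := y ^ (d / q) with hzdef
  have hzq : z ^ q = 1 := by
    rw [hzdef, ← pow_mul, Nat.div_mul_cancel hqd]
    exact pow_orderOf_eq_one y
  have hdq : 0 < d / q := Nat.div_pos (Nat.minFac_le hd0) (by omega)
  have hz1 : z ≠ 1 := by
    intro h
    have hdvd2 : d ∣ d / q := orderOf_dvd_of_pow_eq_one h
    have h1 : d / q < d := Nat.div_lt_self hd0 hq.one_lt
    have := Nat.le_of_dvd hdq hdvd2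
    omega
  have hzconj : α * z * α⁻¹ = z ^ 2 := by
    have := hconjk (d / q)
    rw [hzdef, this, ← pow_mul, mul_comm (d / q) 2]
  obtain ⟨b, hb⟩ : ∃ b, z b ≠ b := by
    by_contra h
    push_neg at h
    exact hz1 (Equiv.ext h)
  exact aux_main α z q hq hq3 hzq b hb hzconj g hg hg1 hcop hle hnd
end

section
/- Let n ≥ 2 and let α ∈ Sₙ be a cyclic permutation of length n (a single n-cycle, e.g. α = (1,2,…,n)). If for every prime divisor p ≥ 3 of n the number 2^{n/p} − 1 is not divisible by p, then the equation α ∘ y ∘ α⁻¹ = y² has only the trivial solution y = 1. -/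
/-- Corollary (A3). Let `α ∈ Sₙ` (`n ≥ 2`) be a single `n`-cycle. If for every
prime divisor `p ≥ 3` of `n` the number `2^{n/p} - 1` is not divisible by `p`,
then `α ∘ y ∘ α⁻¹ = y²` has only the trivial solution `y = 1`. -/
theorem stmt_12 (n : ℕ) (hn : 2 ≤ n) (α : Equiv.Perm (Fin n))
    (hcyc : α.IsCycle) (hsupp : α.support = Finset.univ)
    (h : ∀ p : ℕ, p.Prime → 3 ≤ p → p ∣ n → ¬ p ∣ 2 ^ (n / p) - 1) :
    ∀ y : Equiv.Perm (Fin n), α * y * α⁻¹ = y ^ 2 → y = 1 := by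
  classical
  intro y hy
  by_contra hy1
  have hαord : orderOf α = n := by
    rw [hcyc.orderOf, hsupp, Finset.card_univ, Fintype.card_fin]
  have hαn : α ^ n = 1 := by
    have := pow_orderOf_eq_one α
    rwa [hαord] at this
  have hmove : ∀ x : Fin n, α x ≠ x := by
    intro x
    rw [← Equiv.Perm.mem_support, hsupp]
    exact Finset.mem_univ x
  have htrans : ∀ x w : Fin n, ∃ j : ℕ, (α ^ j) x = w := by
    intro x w
    exact hcyc.exists_pow_eq (hmove x) (hmove w)
  -- general conjugation lemma
  have key : ∀ b : Equiv.Perm (Fin n), α * b * α⁻¹ = b ^ 2 →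
      ∀ j c : ℕ, α ^ j * b ^ c * (α ^ j)⁻¹ = b ^ (2 ^ j * c) := by
    intro b hb j
    induction j with
    | zero => intro c; simp
    | succ j ih =>
      intro c
      have h1 : α * b ^ c * α⁻¹ = b ^ (2 * c) := by
        rw [← conj_pow, hb, ← pow_mul]
      have h2 : α ^ (j + 1) * b ^ c * (α ^ (j + 1))⁻¹
          = α ^ j * (α * b ^ c * α⁻¹) * (α ^ j)⁻¹ := by
        rw [pow_succ]
        group
      rw [h2, h1, ih (2 * c)]
      ring_nf
  -- order of y divides 2^n - 1
  have h2n1 : 1 ≤ 2 ^ n := Nat.one_le_two_pow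
  have hy2n : y ^ (2 ^ n) = y := by
    have := key y hy n 1
    rw [hαn] at this
    simpa using this.symm
  set m := orderOf y with hm
  have hmdvd : m ∣ 2 ^ n - 1 := by
    apply orderOf_dvd_of_pow_eq_one
    have : y ^ (2 ^ n - 1) * y = 1 * y := by
      rw [← pow_succ, one_mul]
      rw [show 2 ^ n - 1 + 1 = 2 ^ n by omega]
      exact hy2n
    exact mul_right_cancel this
  have hodd2n : ¬ (2 : ℕ) ∣ 2 ^ n - 1 := by
    have h2 : (2 : ℕ) ∣ 2 ^ n := dvd_pow_self 2 (by omega)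
    omega
  have hmne1 : m ≠ 1 := fun hc => hy1 (orderOf_eq_one_iff.1 hc)
  have hmpos : 0 < m := orderOf_pos y
  set p := m.minFac with hpdef
  have hp : p.Prime := Nat.minFac_prime hmne1
  have hpm : p ∣ m := Nat.minFac_dvd m
  have hp2 : p ≠ 2 := by
    intro hc
    have h2m : (2:ℕ) ∣ m := by rw [← hc]; exact hpm
    exact hodd2n (h2m.trans hmdvd)
  have hp3 : 3 ≤ p := by
    have := hp.two_le
    omega
  -- the element z of prime order p
  set z := y ^ (m / p) with hzdef
  have hzord : orderOf z = p := by
    rw [hzdef, orderOf_pow, ← hm,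
      Nat.gcd_eq_right (Nat.div_dvd_of_dvd hpm), Nat.div_div_self hpm hmpos.ne']
  have hz2 : α * z * α⁻¹ = z ^ 2 := by
    have := key y hy 1 (m / p)
    simpa [hzdef, pow_mul, mul_comm] using this
  have conjz := key z hz2
  have conjz_app : ∀ j c : ℕ, ∀ x : Fin n,
      (α ^ j) ((z ^ c) x) = (z ^ (2 ^ j * c)) ((α ^ j) x) := by
    intro j c x
    have h1 : α ^ j * z ^ c = z ^ (2 ^ j * c) * α ^ j := by
      rw [← conjz j c]
      group
    rw [← Equiv.Perm.mul_apply, h1, Equiv.Perm.mul_apply]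
  have zp1 : z ^ p = 1 := by rw [← hzord]; exact pow_orderOf_eq_one z
  have zmod : ∀ c : ℕ, z ^ c = z ^ (c % p) := by
    intro c
    conv_lhs => rw [← Nat.div_add_mod c p]
    rw [pow_add, pow_mul, zp1, one_pow, one_mul]
  have zinv : ∀ c : ℕ, (z ^ c)⁻¹ = z ^ (c * (p - 1)) := by
    intro c
    apply inv_eq_of_mul_eq_one_right
    rw [← pow_add, show c + c * (p - 1) = p * c by
      have h1 : p - 1 + 1 = p := Nat.sub_add_cancel hp.one_le
      calc c + c * (p - 1) = c * (p - 1 + 1) := by ring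
      _ = p * c := by rw [h1, mul_comm]]
    rw [pow_mul, zp1, one_pow]
  have hpodd : p % 2 = 1 := by
    rcases Nat.mod_two_eq_zero_or_one p with hc | hc
    · exact absurd ((show (2:ℕ) ∣ p by omega).trans (hpm.trans hmdvd)) hodd2n
    · exact hc
  -- z has no fixed points
  have hfix : ∀ x : Fin n, z x ≠ x := by
    intro x hx
    have hzfix : ∀ w : Fin n, z w = w → z (α w) = α w := by
      intro w hw
      have h2 : (z ^ 2) (α w) = α w := by
        rw [← hz2]
        simp [Equiv.Perm.mul_apply, hw]
      have hfix2 : ∀ t : ℕ, ((z ^ 2) ^ t) (α w) = α w := by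
        intro t
        induction t with
        | zero => simp
        | succ t ih => rw [pow_succ, Equiv.Perm.mul_apply, h2, ih]
      have hu : 2 * ((p + 1) / 2) = p + 1 := by omega
      have hz1 : z = (z ^ 2) ^ ((p + 1) / 2) := by
        rw [← pow_mul, hu, pow_succ, zp1, one_mul]
      rw [hz1]
      exact hfix2 _
    have hall : ∀ j : ℕ, z ((α ^ j) x) = (α ^ j) x := by
      intro j
      induction j with
      | zero => simpa using hx
      | succ j ih =>
        have hstep : (α ^ (j + 1)) x = α ((α ^ j) x) := by
          rw [pow_succ', Equiv.Perm.mul_apply]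
        rw [hstep]
        exact hzfix _ ih
    have hz1 : z = 1 := by
      apply Equiv.ext
      intro w
      obtain ⟨j, hj⟩ := htrans x w
      rw [← hj]
      simpa using hall j
    rw [hz1, orderOf_one] at hzord
    omega
  -- base point and block analysis
  have npos : 0 < n := by omega
  set x0 : Fin n := ⟨0, npos⟩ with hx0
  set S : ℕ → Prop := fun j => ∃ i : ℕ, (α ^ j) x0 = (z ^ i) x0 with hS
  have hSn : S n := ⟨0, by simp [hαn]⟩
  have hex : ∃ j, 0 < j ∧ S j := ⟨n, npos, hSn⟩
  set d := Nat.find hex with hddef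
  obtain ⟨hdpos, hdS⟩ : 0 < d ∧ S d := Nat.find_spec hex
  have hdmin : ∀ j, j < d → ¬(0 < j ∧ S j) := fun j hj => Nat.find_min hex hj
  have hSadd : ∀ a b : ℕ, S a → S b → S (a + b) := by
    rintro a b ⟨i, hi⟩ ⟨i', hi'⟩
    refine ⟨2 ^ a * i' + i, ?_⟩
    calc (α ^ (a + b)) x0 = (α ^ a) ((α ^ b) x0) := by
          rw [pow_add, Equiv.Perm.mul_apply]
    _ = (α ^ a) ((z ^ i') x0) := by rw [hi']
    _ = (z ^ (2 ^ a * i')) ((α ^ a) x0) := conjz_app a i' x0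
    _ = (z ^ (2 ^ a * i')) ((z ^ i) x0) := by rw [hi]
    _ = (z ^ (2 ^ a * i' + i)) x0 := by rw [pow_add, Equiv.Perm.mul_apply]
  have hSsub : ∀ a : ℕ, S a → d ≤ a → S (a - d) := by
    rintro a ⟨i, hi⟩ hda
    obtain ⟨idd, hid⟩ := hdS
    set c := 2 ^ (a - d) * idd with hc
    have h1 : (z ^ c) ((α ^ (a - d)) x0) = (z ^ i) x0 := by
      calc (z ^ c) ((α ^ (a - d)) x0)
          = (α ^ (a - d)) ((z ^ idd) x0) := (conjz_app (a - d) idd x0).symm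
      _ = (α ^ (a - d)) ((α ^ d) x0) := by rw [hid]
      _ = (α ^ a) x0 := by
          rw [← Equiv.Perm.mul_apply, ← pow_add, Nat.sub_add_cancel hda]
      _ = (z ^ i) x0 := hi
    refine ⟨c * (p - 1) + i, ?_⟩
    have h2 : (α ^ (a - d)) x0 = (z ^ c)⁻¹ ((z ^ i) x0) := by
      rw [← h1, Equiv.Perm.inv_def, Equiv.symm_apply_apply]
    rw [h2, zinv, ← Equiv.Perm.mul_apply, ← pow_add]
  have hdvd : ∀ a : ℕ, S a → d ∣ a := by
    intro a
    induction a using Nat.strong_induction_on with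
    | _ a IH =>
      intro hSa
      rcases Nat.lt_or_ge a d with hlt | hge
      · rcases Nat.eq_zero_or_pos a with rfl | hap
        · exact dvd_zero d
        · exact absurd ⟨hap, hSa⟩ (hdmin a hlt)
      · have h1 : d ∣ a - d := IH (a - d) (by omega) (hSsub a hSa hge)
        have h2 : a = (a - d) + d := by omega
        rw [h2]
        exact Nat.dvd_add h1 dvd_rfl
  have hzx0 : ∀ e : ℕ, 0 < e → e < p → (z ^ e) x0 ≠ x0 := by
    intro e he hep hee
    have hcop : Nat.Coprime e p := Nat.Coprime.symm
      ((Nat.Prime.coprime_iff_not_dvd hp).2 fun hdv => by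
        have := Nat.le_of_dvd he hdv; omega)
    obtain ⟨w, -, hw⟩ := Nat.exists_mul_mod_eq_one_of_coprime hcop hp.one_lt
    have hfixt : ∀ t : ℕ, ((z ^ e) ^ t) x0 = x0 := by
      intro t
      induction t with
      | zero => simp
      | succ t ih => rw [pow_succ, Equiv.Perm.mul_apply, hee, ih]
    have h1 : z x0 = x0 := by
      have h2 : z ^ (e * w) = z := by
        rw [zmod (e * w), hw, pow_one]
      rw [← h2, pow_mul]
      exact hfixt w
    exact hfix x0 h1
  -- cancellation of powers of z at x0
  have hcanc : ∀ i i' : ℕ, i < p → i' < p → (z ^ i) x0 = (z ^ i') x0 → i = i' := by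
    have haux : ∀ i i' : ℕ, i ≤ i' → i' < p → (z ^ i) x0 = (z ^ i') x0 → i = i' := by
      intro i i' hle hi' heq
      by_contra hne
      have h1 : (z ^ i) ((z ^ (i' - i)) x0) = (z ^ i) x0 := by
        rw [← Equiv.Perm.mul_apply, ← pow_add, show i + (i' - i) = i' by omega]
        exact heq.symm
      have h2 : (z ^ (i' - i)) x0 = x0 := (z ^ i).injective h1
      exact hzx0 (i' - i) (by omega) (by omega) h2
    intro i i' hi hi' heq
    rcases le_total i i' with hle | hle
    · exact haux i i' hle hi' heq
    · exact (haux i' i hle hi heq.symm).symm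
  have hinjaux : ∀ r i r' i' : ℕ, r ≤ r' → r' < d → i < p → i' < p →
      (α ^ r) ((z ^ i) x0) = (α ^ r') ((z ^ i') x0) → r = r' ∧ i = i' := by
    intro r i r' i' hle hr' hi hi' heq
    have h1 : (α ^ r) ((α ^ (r' - r)) ((z ^ i') x0)) = (α ^ r) ((z ^ i) x0) := by
      rw [← Equiv.Perm.mul_apply, ← pow_add, show r + (r' - r) = r' by omega]
      exact heq.symm
    have h2 : (α ^ (r' - r)) ((z ^ i') x0) = (z ^ i) x0 := (α ^ r).injective h1
    set c := 2 ^ (r' - r) * i' with hc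
    have h3 : (z ^ c) ((α ^ (r' - r)) x0) = (z ^ i) x0 := by
      rw [hc, ← conjz_app]
      exact h2
    have h4 : (α ^ (r' - r)) x0 = (z ^ (c * (p - 1) + i)) x0 := by
      have h5 : (α ^ (r' - r)) x0 = (z ^ c)⁻¹ ((z ^ i) x0) := by
        rw [← h3, Equiv.Perm.inv_def, Equiv.symm_apply_apply]
      rw [h5, zinv, ← Equiv.Perm.mul_apply, ← pow_add]
    have h7 : d ∣ r' - r := hdvd _ ⟨c * (p - 1) + i, h4⟩
    have hr : r = r' := by
      rcases Nat.eq_zero_or_pos (r' - r) with h0 | h0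
      · omega
      · have := Nat.le_of_dvd h0 h7; omega
    refine ⟨hr, hcanc i i' hi hi' ?_⟩
    apply (α ^ r').injective
    rw [← heq, hr]
  have hSmul : ∀ t : ℕ, S (d * t) := by
    intro t
    induction t with
    | zero => exact ⟨0, by simp⟩
    | succ t ih =>
      have := hSadd (d * t) d ih hdS
      rwa [show d * t + d = d * (t + 1) by ring] at this
  set F : Fin d × Fin p → Fin n :=
    fun q => (α ^ (q.1 : ℕ)) ((z ^ (q.2 : ℕ)) x0) with hF
  have hFinj : Function.Injective F := by
    rintro ⟨r, i⟩ ⟨r', i'⟩ heq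
    simp only [hF] at heq
    rcases le_total (r : ℕ) (r' : ℕ) with hle | hle
    · obtain ⟨h1, h2⟩ := hinjaux r i r' i' hle r'.isLt i.isLt i'.isLt heq
      exact Prod.ext (Fin.ext h1) (Fin.ext h2)
    · obtain ⟨h1, h2⟩ := hinjaux r' i' r i hle r.isLt i'.isLt i.isLt heq.symm
      exact Prod.ext (Fin.ext h1.symm) (Fin.ext h2.symm)
  have hFsurj : Function.Surjective F := by
    intro w
    obtain ⟨j, hj⟩ := htrans x0 w
    obtain ⟨i, hi⟩ := hSmul (j / d)
    refine ⟨(⟨j % d, Nat.mod_lt j hdpos⟩, ⟨i % p, Nat.mod_lt i hp.pos⟩), ?_⟩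
    simp only [hF]
    calc (α ^ (j % d)) ((z ^ (i % p)) x0)
        = (α ^ (j % d)) ((z ^ i) x0) := by rw [← zmod i]
    _ = (α ^ (j % d)) ((α ^ (d * (j / d))) x0) := by rw [hi]
    _ = (α ^ (j % d + d * (j / d))) x0 := by
        rw [pow_add, Equiv.Perm.mul_apply]
    _ = (α ^ j) x0 := by rw [Nat.mod_add_div j d]
    _ = w := hj
  have hcard : d * p = n := by
    have hb := Fintype.card_of_bijective ⟨hFinj, hFsurj⟩
    simpa [Fintype.card_prod, Fintype.card_fin] using hb
  have hpn : p ∣ n := ⟨d, by rw [← hcard, mul_comm]⟩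
  have hnp : n / p = d := by rw [← hcard, Nat.mul_div_cancel _ hp.pos]
  obtain ⟨i0, hi0⟩ := hdS
  haveI : Fact p.Prime := ⟨hp⟩
  have hTcast : ((2 ^ d : ℕ) : ZMod p) = (2 : ZMod p) ^ d := by push_cast; ring
  have hTeq : ((2 : ZMod p)) ^ d = 1 := by
    by_contra hT
    have h1T : (1 : ZMod p) - (2 : ZMod p) ^ d ≠ 0 := sub_ne_zero.mpr (Ne.symm hT)
    set J : ZMod p := (i0 : ZMod p) * ((1 : ZMod p) - (2 : ZMod p) ^ d)⁻¹ with hJdef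
    set j : ℕ := J.val with hjdef
    have hcast : ((j : ℕ) : ZMod p) = J := ZMod.natCast_rightInverse J
    have hmodeq : (2 ^ d * j + i0) % p = j % p := by
      have hzm : ((2 ^ d * j + i0 : ℕ) : ZMod p) = ((j : ℕ) : ZMod p) := by
        push_cast
        rw [hcast]
        have hJ1 : J * ((1 : ZMod p) - (2 : ZMod p) ^ d) = (i0 : ZMod p) := by
          rw [hJdef]
          exact inv_mul_cancel_right₀ h1T _
        linear_combination -hJ1
      exact (ZMod.natCast_eq_natCast_iff' _ _ _).1 hzm
    have hfixw : (α ^ d) ((z ^ j) x0) = (z ^ j) x0 := by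
      calc (α ^ d) ((z ^ j) x0)
          = (z ^ (2 ^ d * j)) ((α ^ d) x0) := conjz_app d j x0
      _ = (z ^ (2 ^ d * j)) ((z ^ i0) x0) := by rw [hi0]
      _ = (z ^ (2 ^ d * j + i0)) x0 := by rw [pow_add, Equiv.Perm.mul_apply]
      _ = (z ^ j) x0 := by rw [zmod (2 ^ d * j + i0), hmodeq, ← zmod j]
    have hαd1 : α ^ d = 1 := hcyc.pow_eq_one_iff.2 ⟨(z ^ j) x0, hmove _, hfixw⟩
    have hnd : n ∣ d := by
      have := orderOf_dvd_of_pow_eq_one hαd1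
      rwa [hαord] at this
    have hdltn : d < n := by
      rw [← hcard]
      exact (lt_mul_iff_one_lt_right hdpos).2 hp.one_lt
    have := Nat.le_of_dvd hdpos hnd
    omega
  apply h p hp hp3 hpn
  rw [hnp]
  have hzero : ((2 ^ d - 1 : ℕ) : ZMod p) = 0 := by
    have h1 : (1 : ℕ) ≤ 2 ^ d := Nat.one_le_two_pow
    push_cast [h1]
    rw [hTeq]
    ring
  exact (ZMod.natCast_eq_zero_iff _ _).1 hzero
end

section
/- Let n ≥ 3 and let p ≥ 3 be a prime divisor of n such that p divides 2^{n/p} − 1. Then for every cyclic permutation α ∈ Sₙ of length n, the equation α ∘ y ∘ α⁻¹ = y² has a non-trivial solution y ≠ 1. -/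
set_option linter.unusedSectionVars false

section Aux

variable {n : ℕ} [NeZero n]

private def dF (m : ℕ) (x : Fin n) : Fin n := Fin.ofNat n (m * 2 ^ (m - x.val % m))

private lemma dF_val (m : ℕ) (x : Fin n) :
    (dF m x).val = (m * 2 ^ (m - x.val % m)) % n := Fin.val_ofNat _ _

private lemma dF_mod {m : ℕ} (hmn : m ∣ n) (x : Fin n) : (dF m x).val % m = 0 := by
  rw [dF_val, Nat.mod_mod_of_dvd _ hmn, Nat.mul_mod_right]

private lemma dF_congr (m : ℕ) (x z : Fin n) (h : x.val % m = z.val % m) :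
    dF m x = dF m z := by
  unfold dF; rw [h]

private lemma add_mod_m {m : ℕ} (hmn : m ∣ n) (a b : Fin n) (hb : b.val % m = 0) :
    (a + b).val % m = a.val % m := by
  rw [Fin.val_add, Nat.mod_mod_of_dvd _ hmn, Nat.add_mod, hb, Nat.add_zero, Nat.mod_mod]

private lemma sub_mod_m {m : ℕ} (hmn : m ∣ n) (a b : Fin n) (hb : b.val % m = 0) :
    (a - b).val % m = a.val % m := by
  have h : (a - b) + b = a := sub_add_cancel a b
  calc (a - b).val % m = ((a - b) + b).val % m := (add_mod_m hmn _ _ hb).symm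
    _ = a.val % m := by rw [h]

private def yP (m : ℕ) (hmn : m ∣ n) : Equiv.Perm (Fin n) where
  toFun x := x + dF m x
  invFun x := x - dF m x
  left_inv x := by
    have h : dF m (x + dF m x) = dF m x :=
      dF_congr m _ _ (add_mod_m hmn _ _ (dF_mod hmn x))
    simp only [h]
    exact add_sub_cancel_right x _
  right_inv x := by
    have h : dF m (x - dF m x) = dF m x :=
      dF_congr m _ _ (sub_mod_m hmn _ _ (dF_mod hmn x))
    simp only [h]
    exact sub_add_cancel x _

private lemma yP_apply (m : ℕ) (hmn : m ∣ n) (x : Fin n) :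
    yP m hmn x = x + dF m x := rfl

end Aux

private lemma aux_finRotate (n p : ℕ) (hn : 3 ≤ n) (hp : p.Prime) (hp3 : 3 ≤ p)
    (hpn : p ∣ n) (hdvd : p ∣ 2 ^ (n / p) - 1) :
    ∃ y : Equiv.Perm (Fin n), y ≠ 1 ∧ finRotate n * y * (finRotate n)⁻¹ = y ^ 2 := by
  haveI : NeZero n := ⟨by omega⟩
  set m := n / p with hm
  have hnm : n = m * p := (Nat.div_mul_cancel hpn).symm
  have hm1 : 0 < m := Nat.div_pos (Nat.le_of_dvd (by omega) hpn) (by omega)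
  have hmn : m ∣ n := ⟨p, hnm⟩
  have h1 : 1 ≤ 2 ^ m := Nat.one_le_two_pow
  have h2m : 2 ^ m ≡ 1 [MOD p] := ((Nat.modEq_iff_dvd' h1).mpr hdvd).symm
  refine ⟨yP m hmn, ?_, ?_⟩
  · -- nontrivial
    intro h
    have h0 : yP m hmn 0 = 0 := by rw [h]; rfl
    rw [yP_apply, zero_add] at h0
    have hv : (dF m (0 : Fin n)).val = 0 := by rw [h0]; rfl
    rw [dF_val] at hv
    have hz : (0 : Fin n).val % m = 0 := by simp
    rw [hz, Nat.sub_zero] at hv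
    have hdn : n ∣ m * 2 ^ m := Nat.dvd_of_mod_eq_zero hv
    rw [hnm] at hdn
    have hp2 : p ∣ 2 ^ m := (Nat.mul_dvd_mul_iff_left hm1).mp hdn
    have hd2 : p ∣ 2 := hp.dvd_of_dvd_pow hp2
    have := Nat.le_of_dvd (by norm_num) hd2
    omega
  · -- the conjugation equation
    rw [mul_inv_eq_iff_eq_mul]
    ext x
    obtain ⟨k, rfl⟩ : ∃ k, n = k + 1 := ⟨n - 1, by omega⟩
    simp only [Equiv.Perm.mul_apply, finRotate_succ_apply, sq, yP_apply]
    have hdd : dF m ((x+1) + dF m (x+1)) = dF m (x+1) :=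
      dF_congr m _ _ (add_mod_m hmn _ _ (dF_mod hmn (x+1)))
    rw [hdd]
    have key : dF m x = dF m (x+1) + dF m (x+1) := by
      have h1v : (1 : Fin (k+1)).val = 1 := by rw [Fin.val_one']; exact Nat.mod_eq_of_lt (by omega)
      have hs : ((x+1) : Fin (k+1)).val % m = (x.val % m + 1) % m := by
        rw [Fin.val_add, h1v, Nat.mod_mod_of_dvd _ hmn]
        exact ((Nat.mod_modEq x.val m).add_right 1).symm
      have hr : x.val % m < m := Nat.mod_lt _ hm1
      have hP : 2 ^ (m - x.val % m) ≡ 2 ^ (m - (x+1 : Fin (k+1)).val % m)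
          + 2 ^ (m - (x+1 : Fin (k+1)).val % m) [MOD p] := by
        rcases Nat.lt_or_ge (x.val % m + 1) m with h | h
        · rw [hs, Nat.mod_eq_of_lt h,
            show m - x.val % m = (m - (x.val % m + 1)) + 1 from by omega, pow_succ, mul_two]
        · have hs0 : (x+1 : Fin (k+1)).val % m = 0 := by
            rw [hs, show x.val % m + 1 = m from by omega, Nat.mod_self]
          rw [hs0, Nat.sub_zero, show m - x.val % m = 1 from by omega]
          simpa using (h2m.add h2m).symm
      have hN := Nat.ModEq.mul_left' (c := m) hP
      rw [Nat.mul_add, ← hnm] at hN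
      apply Fin.ext
      rw [Fin.val_add, dF_val, dF_val, ← Nat.add_mod]
      exact hN
    rw [key]
    abel

/-- Theorem (B1). Let `p ≥ 3` be a prime divisor of `n ≥ 3` with `p ∣ 2^{n/p} - 1`.
Then for every single `n`-cycle `α ∈ Sₙ` the equation `α ∘ y ∘ α⁻¹ = y²` has a
non-trivial solution `y ≠ 1`. -/
theorem stmt_13 (n p : ℕ) (hn : 3 ≤ n) (hp : p.Prime) (hp3 : 3 ≤ p) (hpn : p ∣ n)
    (hdvd : p ∣ 2 ^ (n / p) - 1) (α : Equiv.Perm (Fin n))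
    (hcyc : α.IsCycle) (hsupp : α.support = Finset.univ) :
    ∃ y : Equiv.Perm (Fin n), y ≠ 1 ∧ α * y * α⁻¹ = y ^ 2 := by
  obtain ⟨y, hy1, hy2⟩ := aux_finRotate n p hn hp hp3 hpn hdvd
  have hconj : IsConj (finRotate n) α := by
    rw [Equiv.Perm.isConj_iff_cycleType_eq,
      cycleType_finRotate_of_le (by omega), hcyc.cycleType, hsupp]
    simp
  obtain ⟨c, hc⟩ := isConj_iff.mp hconj
  refine ⟨MulAut.conj c y, ?_, ?_⟩
  · intro h
    apply hy1
    have h2 : MulAut.conj c y = MulAut.conj c 1 := by simpa using h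
    exact (MulAut.conj c).injective h2
  · have : α = MulAut.conj c (finRotate n) := by simpa [MulAut.conj_apply] using hc.symm
    rw [this]
    calc MulAut.conj c (finRotate n) * MulAut.conj c y * (MulAut.conj c (finRotate n))⁻¹
        = MulAut.conj c (finRotate n * y * (finRotate n)⁻¹) := by
          rw [map_mul, map_mul, map_inv]
      _ = MulAut.conj c (y ^ 2) := by rw [hy2]
      _ = (MulAut.conj c y) ^ 2 := by rw [map_pow]
end

section
/- Let p ≥ 3 be a prime, q ≥ 1 an integer with p ∣ 2^q − 1, and n = pq. On the n-element set P = {1,…,q} × (ℤ/pℤ) define β(i,j) = (i+1, 2j) for 1 ≤ i ≤ q−1 and β(q,j) = (1, 2j+1), and define y(i,j) = (i, j+1) (second coordinates taken modulo p). Then β and y are permutations of P, β consists of exactly one cycle of length n (β is an n-cycle), y ≠ 1, each cycle of y is ((i,1),(i,2),…,(i,p)) so y has exactly q cycles of length p, and β ∘ y ∘ β⁻¹ = y² (equivalently β ∘ y = y² ∘ β). -/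
/-- The construction in Theorem (B1). Let `p ≥ 3` be a prime, `q ≥ 1`,
`p ∣ 2^q - 1` and `n = pq`. On the set `P = Fin q × ℤ/pℤ` (the first coordinate
written 0-indexed, so `(i,j) ↦ (i+1, 2j)` for `i+1 < q` and `(q-1, j) ↦ (0, 2j+1)`)
there are permutations `β` and `y` given by the indicated formulas such that `β`
is a single `n`-cycle, `y ≠ 1`, `y` has exactly `q` cycles, all of length `p`
(each cycle of `y` being `((i,1),(i,2),…,(i,p))`), and `β ∘ y ∘ β⁻¹ = y²`. -/
theorem stmt_14 (p q n : ℕ) [NeZero p] [NeZero q] (hp : p.Prime) (hp3 : 3 ≤ p) (hq : 1 ≤ q)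
    (hdvd : p ∣ 2 ^ q - 1) (hn : n = p * q) :
    ∃ β y : Equiv.Perm (Fin q × ZMod p),
      (∀ (i : Fin q) (j : ZMod p),
          β (i, j) = if (i : ℕ) + 1 < q then (i + 1, 2 * j) else (i + 1, 2 * j + 1)) ∧
      (∀ (i : Fin q) (j : ZMod p), y (i, j) = (i, j + 1)) ∧
      β.IsCycle ∧ β.support = Finset.univ ∧ β.support.card = n ∧
      y ≠ 1 ∧ y.cycleType = Multiset.replicate q p ∧
      β * y * β⁻¹ = y ^ 2 := by
  haveI := Fact.mk hp
  -- q ≥ 2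
  have hq2 : 2 ≤ q := by
    by_contra h
    have hq1 : q = 1 := by omega
    subst hq1
    simp at hdvd
    omega
  have h2ne : (2 : ZMod p) ≠ 0 := by
    have h : ((2:ℕ) : ZMod p) ≠ 0 := by
      rw [Ne, ZMod.natCast_eq_zero_iff]
      intro h
      have := Nat.le_of_dvd (by norm_num) h
      omega
    push_cast at h
    exact h
  have h2q : (2 : ZMod p) ^ q = 1 := by
    have h0 : ((2 ^ q - 1 : ℕ) : ZMod p) = 0 := by
      rw [ZMod.natCast_eq_zero_iff]; exact hdvd
    have h1 : (1:ℕ) ≤ 2 ^ q := Nat.one_le_two_pow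
    rw [Nat.cast_sub h1] at h0
    push_cast at h0
    exact sub_eq_zero.mp h0
  -- definitions
  set e : Fin q → ZMod p := fun i => if (i : ℕ) + 1 < q then 0 else 1 with he
  let β : Equiv.Perm (Fin q × ZMod p) := {
    toFun := fun x => (x.1 + 1, 2 * x.2 + e x.1)
    invFun := fun x => (x.1 - 1, (x.2 - e (x.1 - 1)) * 2⁻¹)
    left_inv := by
      rintro ⟨i, j⟩
      simp only [add_sub_cancel_right]
      rw [Prod.mk.injEq]
      constructor
      · rfl
      · field_simp
    right_inv := by
      rintro ⟨i, j⟩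
      simp only [sub_add_cancel]
      rw [Prod.mk.injEq]
      constructor
      · rfl
      · field_simp
        ring }
  let y : Equiv.Perm (Fin q × ZMod p) := Equiv.prodCongr (Equiv.refl _) (Equiv.addRight 1)
  have hβ : ∀ x : Fin q × ZMod p, β x = (x.1 + 1, 2 * x.2 + e x.1) := fun x => rfl
  have hy : ∀ x : Fin q × ZMod p, y x = (x.1, x.2 + 1) := fun x => rfl
  -- basic facts
  have hone : (1 : ZMod p) ≠ 0 := one_ne_zero
  have hfinone : (1 : Fin q) ≠ 0 := by
    intro h
    rw [Fin.one_eq_zero_iff] at h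
    omega
  have hβfix : ∀ x : Fin q × ZMod p, β x ≠ x := by
    rintro ⟨i, j⟩ h
    rw [hβ, Prod.mk.injEq] at h
    have h1 : i + 1 = i := h.1
    have : (1 : Fin q) = 0 := by
      have := congrArg (fun z => z - i) h1
      simpa [add_comm, add_sub_cancel_right] using this
    exact hfinone this
  have hyfix : ∀ x : Fin q × ZMod p, y x ≠ x := by
    rintro ⟨i, j⟩ h
    rw [hy, Prod.mk.injEq] at h
    have h1 : j + 1 = j := h.2
    have : (1 : ZMod p) = 0 := by
      have := congrArg (fun z => z - j) h1
      simpa [add_comm, add_sub_cancel_right] using this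
    exact hone this
  -- powers of y
  have hypow : ∀ (m : ℕ) (x : Fin q × ZMod p), (y ^ m) x = (x.1, x.2 + m) := by
    intro m
    induction m with
    | zero => intro x; simp
    | succ k ih =>
      intro x
      rw [pow_succ', Equiv.Perm.mul_apply, hy, ih]
      push_cast
      ring_nf
  -- powers of β at (0,0)
  open Fin.NatCast in
  have hbpow : ∀ m : ℕ, (β ^ m) ((0 : Fin q), (0 : ZMod p))
      = ((m : Fin q), 2 ^ (m % q) * ((m / q : ℕ) : ZMod p)) := by
    intro m
    induction m with
    | zero => simp
    | succ k ih =>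
      rw [pow_succ', Equiv.Perm.mul_apply, hβ, ih]
      have hkq : k % q < q := Nat.mod_lt _ (by omega)
      have hval : (((k : Fin q) : ℕ)) = k % q := Fin.val_natCast k q
      have hfst : (k : Fin q) + 1 = ((k + 1 : ℕ) : Fin q) := by push_cast; ring
      have hdm := Nat.div_add_mod k q
      by_cases hc : k % q + 1 < q
      · have hm : (k + 1) % q = k % q + 1 := by
          have key : k + 1 = q * (k / q) + (k % q + 1) := by omega
          rw [key, Nat.mul_add_mod, Nat.mod_eq_of_lt hc]
        have hd : (k + 1) / q = k / q := by
          have key : k + 1 = q * (k / q) + (k % q + 1) := by omega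
          rw [key, Nat.mul_add_div (by omega), Nat.div_eq_of_lt hc, Nat.add_zero]
        have hez : e (k : Fin q) = 0 := by
          rw [he]
          simp only [hval]
          rw [if_pos hc]
        rw [Prod.mk.injEq]
        refine ⟨hfst, ?_⟩
        rw [hez, hm, hd, pow_succ]
        ring
      · have hq' : k % q + 1 = q := by omega
        have hm : (k + 1) % q = 0 := by
          have key : k + 1 = q * (k / q + 1) := by rw [Nat.mul_succ]; omega
          rw [key, Nat.mul_mod_right]
        have hd : (k + 1) / q = k / q + 1 := by
          have key : k + 1 = q * (k / q + 1) := by rw [Nat.mul_succ]; omega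
          rw [key, Nat.mul_div_cancel_left _ (show 0 < q by omega)]
        have heo : e (k : Fin q) = 1 := by
          rw [he]
          simp only [hval]
          rw [if_neg hc]
        rw [Prod.mk.injEq]
        refine ⟨hfst, ?_⟩
        rw [heo, hm, hd, pow_zero, one_mul]
        push_cast
        have : (2 : ZMod p) * (2 ^ (k % q) * ((k / q : ℕ) : ZMod p))
            = 2 ^ (k % q + 1) * ((k / q : ℕ) : ZMod p) := by ring
        rw [this, hq', h2q]
        ring
  -- every point is in the cycle of (0,0)
  open Fin.NatCast in
  have hsc : ∀ x : Fin q × ZMod p, β.SameCycle ((0 : Fin q), (0 : ZMod p)) x := by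
    rintro ⟨i, j⟩
    have h2powne : (2 : ZMod p) ^ (i : ℕ) ≠ 0 := pow_ne_zero _ h2ne
    set a : ZMod p := j * ((2 : ZMod p) ^ (i : ℕ))⁻¹ with ha
    set m : ℕ := q * a.val + (i : ℕ) with hm
    have hmod : m % q = (i : ℕ) := by
      rw [hm, Nat.mul_add_mod, Nat.mod_eq_of_lt i.isLt]
    have hdiv : m / q = a.val := by
      rw [hm, Nat.mul_add_div (by omega), Nat.div_eq_of_lt i.isLt, Nat.add_zero]
    refine ⟨(m : ℤ), ?_⟩
    rw [zpow_natCast, hbpow m, hmod, hdiv]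
    rw [Prod.mk.injEq]
    constructor
    · ext
      rw [Fin.val_natCast, hm, Nat.mul_add_mod, Nat.mod_eq_of_lt i.isLt]
    · rw [ZMod.natCast_val, ZMod.cast_id, ha]
      field_simp
  -- β is a cycle
  have hcyc : β.IsCycle := ⟨((0 : Fin q), (0 : ZMod p)), hβfix _, fun x _ => hsc x⟩
  have hsupβ : β.support = Finset.univ := by
    apply Finset.eq_univ_iff_forall.mpr
    intro x
    rw [Equiv.Perm.mem_support]
    exact hβfix x
  have hsupy : y.support = Finset.univ := by
    apply Finset.eq_univ_iff_forall.mpr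
    intro x
    rw [Equiv.Perm.mem_support]
    exact hyfix x
  have hcard : (Finset.univ : Finset (Fin q × ZMod p)).card = p * q := by
    rw [Finset.card_univ]
    simp [ZMod.card, mul_comm]
  -- y ≠ 1
  have hy1 : y ≠ 1 := by
    intro h
    exact hyfix ((0 : Fin q), (0 : ZMod p)) (by rw [h]; rfl)
  -- cycle type of y
  have hyp1 : y ^ p = 1 := by
    ext x
    all_goals simp [hypow, ZMod.natCast_self]
  have hord : orderOf y = p := orderOf_eq_prime hyp1 hy1
  have hall : ∀ r ∈ y.cycleType, r = p := by
    intro r hr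
    have h2r := Equiv.Perm.two_le_of_mem_cycleType hr
    have hdr : r ∣ p := by
      rw [← hord, ← Equiv.Perm.lcm_cycleType]
      exact Multiset.dvd_lcm hr
    rcases (hp.eq_one_or_self_of_dvd r hdr) with h | h
    · omega
    · exact h
  have hrep : y.cycleType = Multiset.replicate (Multiset.card y.cycleType) p :=
    Multiset.eq_replicate_card.mpr hall
  have hsum : y.cycleType.sum = p * q := by
    rw [Equiv.Perm.sum_cycleType, hsupy, hcard]
  have hcardct : Multiset.card y.cycleType = q := by
    have : (Multiset.replicate (Multiset.card y.cycleType) p).sum = p * q := by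
      rw [← hrep]; exact hsum
    rw [Multiset.sum_replicate, smul_eq_mul] at this
    have hp0 : p ≠ 0 := by omega
    have : Multiset.card y.cycleType * p = q * p := by rw [this]; ring
    exact Nat.eq_of_mul_eq_mul_right (by omega) this
  -- conjugation
  have hconj : β * y * β⁻¹ = y ^ 2 := by
    have hmul : β * y = y ^ 2 * β := by
      ext x
      · rw [Equiv.Perm.mul_apply, Equiv.Perm.mul_apply, hy, hβ, sq,
          Equiv.Perm.mul_apply, hβ, hy, hy]
      · rw [Equiv.Perm.mul_apply, Equiv.Perm.mul_apply, hy, hβ, sq,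
          Equiv.Perm.mul_apply, hβ, hy, hy]
        push_cast
        ring
    rw [hmul, mul_assoc, mul_inv_cancel, mul_one]
  refine ⟨β, y, ?_, ?_, hcyc, hsupβ, ?_, hy1, ?_, hconj⟩
  · intro i j
    rw [hβ]
    by_cases hc : (i : ℕ) + 1 < q
    · rw [if_pos hc]
      simp only [he, if_pos hc]
      rw [add_zero]
    · rw [if_neg hc]
      simp only [he, if_neg hc]
  · intro i j
    rw [hy]
  · rw [hsupβ, hcard, hn]
  · rw [hrep, hcardct]
end

section
/- Let p ≥ 3 be a prime divisor of 2^{2^m} − 1 (m ≥ 0) and let n = p·2^m. Let α ∈ Sₙ be a cyclic permutation of length n (e.g. α = (1,2,…,n)). Then the equation α ∘ y ∘ α⁻¹ = y² has a non-trivial solution, and for any non-trivial solution y ≠ 1 one has y^p = 1 and the set of all solutions is exactly {y, y², …, y^{p−1}, y^p = 1}; in particular the equation has exactly p solutions. -/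
open Equiv Function

namespace Stmt15Aux

section Main
variable {m p n : ℕ}

-- counting lemma
lemma card_dvd_of_const_period {β : Type*} [Fintype β] [DecidableEq β] (z : Equiv.Perm β) (s : ℕ)
    (hpos : 0 < s) (hper : ∀ x, (z ^ s) x = x)
    (hmin : ∀ x k, 0 < k → k < s → (z ^ k) x ≠ x) : s ∣ Fintype.card β := by
  rcases isEmpty_or_nonempty β with h | h
  · simp [Fintype.card_eq_zero]
  set orb : β → Finset β := fun x => (Finset.range s).image (fun k => (z ^ k) x) with horb
  have hsq : ∀ (q : ℕ) (x : β), (z ^ (s * q)) x = x := by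
    intro q
    induction q with
    | zero => simp
    | succ q ih => intro x; rw [Nat.mul_succ, pow_add, Equiv.Perm.mul_apply, hper, ih]
  have hmod : ∀ (a : ℕ) (x : β), (z ^ a) x = (z ^ (a % s)) x := by
    intro a x
    conv_lhs => rw [← Nat.mod_add_div a s]
    rw [pow_add, Equiv.Perm.mul_apply, hsq]
  have hmem : ∀ x, x ∈ orb x := by
    intro x
    refine Finset.mem_image.2 ⟨0, Finset.mem_range.2 hpos, by simp⟩
  have hcard : ∀ x, (orb x).card = s := by
    intro x
    rw [horb]
    rw [Finset.card_image_of_injOn, Finset.card_range]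
    intro a ha b hb hab
    simp only [Finset.coe_range, Set.mem_Iio] at ha hb
    simp only [] at hab
    rcases le_total a b with hle | hle
    · by_contra hne
      have h1 : (z ^ (b - a)) ((z ^ a) x) = (z ^ a) x := by
        rw [← Equiv.Perm.mul_apply, ← pow_add, Nat.sub_add_cancel hle, hab]
      exact hmin _ _ (Nat.sub_pos_of_lt (lt_of_le_of_ne hle hne)) (lt_of_le_of_lt (Nat.sub_le _ _) hb) h1
    · by_contra hne
      have h1 : (z ^ (a - b)) ((z ^ b) x) = (z ^ b) x := by
        rw [← Equiv.Perm.mul_apply, ← pow_add, Nat.sub_add_cancel hle, hab]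
      exact hmin _ _ (Nat.sub_pos_of_lt (lt_of_le_of_ne hle (Ne.symm hne))) (lt_of_le_of_lt (Nat.sub_le _ _) ha) h1
  have hsub : ∀ (x : β) (k : ℕ), orb ((z ^ k) x) ⊆ orb x := by
    intro x k y hy
    rw [horb] at hy ⊢
    obtain ⟨j, hj, rfl⟩ := Finset.mem_image.1 hy
    refine Finset.mem_image.2 ⟨(j + k) % s, Finset.mem_range.2 (Nat.mod_lt _ hpos), ?_⟩
    rw [← hmod, pow_add, Equiv.Perm.mul_apply]
  have heq : ∀ x y, y ∈ orb x → orb y = orb x := by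
    intro x y hy
    obtain ⟨k, _, rfl⟩ := Finset.mem_image.1 hy
    exact Finset.eq_of_subset_of_card_le (hsub x k) (by rw [hcard, hcard])
  have hfib := Finset.card_eq_sum_card_fiberwise
    (f := orb) (s := Finset.univ) (t := Finset.univ.image orb)
    (fun x _ => Finset.mem_image_of_mem orb (Finset.mem_univ x))
  rw [← Finset.card_univ]
  rw [hfib]
  have : ∀ c ∈ Finset.univ.image orb, (Finset.univ.filter (fun x => orb x = c)).card = s := by
    intro c hc
    obtain ⟨x₀, _, rfl⟩ := Finset.mem_image.1 hc
    have : Finset.univ.filter (fun x => orb x = orb x₀) = orb x₀ := by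
      ext y
      simp only [Finset.mem_filter, Finset.mem_univ, true_and]
      constructor
      · intro h; rw [← h]; exact hmem y
      · intro h; exact heq _ _ h
    rw [this, hcard]
  rw [Finset.sum_congr rfl this, Finset.sum_const, smul_eq_mul]
  exact dvd_mul_left s _



-- doubling lemma
lemma sol_double {N : ℕ} [NeZero N] (z : Equiv.Perm (ZMod N))
    (hz : ∀ x, z (z x) = z (x - 1) + 1) :
    ∀ (t : ℕ) (x : ZMod N), (z ^ (2 * t)) x = (z ^ t) (x - 1) + 1 := by
  intro t
  induction t with
  | zero => intro x; simp
  | succ t ih =>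
    intro x
    have h2 : 2 * (t + 1) = 2 * t + 2 := by ring
    rw [h2, pow_add, Equiv.Perm.mul_apply, pow_two, Equiv.Perm.mul_apply, hz x, ih,
      add_sub_cancel_right, pow_succ, Equiv.Perm.mul_apply]

lemma sol_pow2 {N : ℕ} [NeZero N] (z : Equiv.Perm (ZMod N))
    (hz : ∀ x, z (z x) = z (x - 1) + 1) :
    ∀ (k t : ℕ) (x : ZMod N), (z ^ (2 ^ k * t)) x = (z ^ t) (x - (k : ZMod N)) + (k : ZMod N) := by
  intro k
  induction k with
  | zero => intro t x; simp
  | succ k ih =>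
    intro t x
    have h2 : 2 ^ (k + 1) * t = 2 * (2 ^ k * t) := by ring
    rw [h2, sol_double z hz, ih]
    have e1 : x - 1 - (k : ZMod N) = x - ((k + 1 : ℕ) : ZMod N) := by push_cast; ring
    have e2 : ((k + 1 : ℕ) : ZMod N) = (k : ZMod N) + 1 := by push_cast; ring
    rw [e1, e2, add_assoc]

lemma std_order {N : ℕ} [NeZero N] (z : Equiv.Perm (ZMod N))
    (hz : ∀ x, z (z x) = z (x - 1) + 1) :
    ∃ s : ℕ, s ∣ N ∧ Odd s ∧ z ^ s = 1 ∧ (s = 1 → z = 1) := by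
  have hN : N ≠ 0 := NeZero.ne N
  have hzN : z ^ (2 ^ N) = z := by
    ext x
    have := sol_pow2 z hz N 1 x
    simpa [ZMod.natCast_self] using this
  have hord : orderOf z ∣ 2 ^ N - 1 := by
    have h1 : z ^ (2 ^ N) = z ^ 1 := by simpa using hzN
    have := pow_eq_pow_iff_modEq.mp h1
    have h2 : (1 : ℕ) ≤ 2 ^ N := Nat.one_le_two_pow
    exact (Nat.modEq_iff_dvd' h2).mp this.symm
  have hodd2 : Odd (2 ^ N - 1) := by
    have heven : Even (2 ^ N) := by
      refine (Nat.even_pow).2 ⟨even_two, hN⟩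
    exact Nat.Even.sub_odd Nat.one_le_two_pow heven odd_one
  have hoddord : Odd (orderOf z) := hodd2.of_dvd_nat hord  -- check name
  set f : ZMod N → ℕ := fun x => Function.minimalPeriod (⇑z) x with hf
  have hfper : ∀ x, Function.IsPeriodicPt (⇑z) (orderOf z) x := by
    intro x
    unfold Function.IsPeriodicPt
    rw [Equiv.Perm.iterate_eq_pow, pow_orderOf_eq_one]
    exact rfl
  have hfdvd : ∀ x, f x ∣ orderOf z := fun x => (hfper x).minimalPeriod_dvd
  have hfodd : ∀ x, Odd (f x) := fun x => hoddord.of_dvd_nat (hfdvd x)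
  have hfpos : ∀ x, 0 < f x := fun x =>
    (hfper x).minimalPeriod_pos (orderOf_pos z)
  have hiter : ∀ (k : ℕ) (x : ZMod N), (⇑z)^[k] x = (z ^ k) x := by
    intro k x; rw [Equiv.Perm.iterate_eq_pow]
  have hstep : ∀ x : ZMod N, f (x + 1) = f x := by
    intro x
    have h1 : (z ^ (2 * f x)) (x + 1) = x + 1 := by
      rw [sol_double z hz, add_sub_cancel_right]
      have : (z ^ f x) x = x := by
        rw [← hiter]; exact Function.iterate_minimalPeriod
      rw [this]
    have hd1 : f (x + 1) ∣ 2 * f x := by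
      refine Function.IsPeriodicPt.minimalPeriod_dvd ?_
      unfold Function.IsPeriodicPt
      rw [Equiv.Perm.iterate_eq_pow]
      exact h1
    have hd1' : f (x + 1) ∣ f x := by
      have hcop : Nat.Coprime (f (x + 1)) 2 := by
        have h2 : ¬ (2 ∣ f (x + 1)) := by
          rcases hfodd (x + 1) with ⟨j, hj⟩
          omega
        exact ((Nat.Prime.coprime_iff_not_dvd Nat.prime_two).mpr h2).symm
      exact Nat.Coprime.dvd_of_dvd_mul_left hcop hd1
    have h2 : (z ^ (2 * f (x + 1))) (x + 1) = x + 1 := by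
      have : Function.IsPeriodicPt (⇑z) (2 * f (x + 1)) (x + 1) :=
        Function.isPeriodicPt_iff_minimalPeriod_dvd.mpr (dvd_mul_left _ 2)
      rw [← hiter]; exact this
    rw [sol_double z hz, add_sub_cancel_right] at h2
    have h3 : (z ^ f (x + 1)) x = x := by
      have := add_right_cancel h2
      exact this
    have hd2 : f x ∣ f (x + 1) := by
      refine Function.IsPeriodicPt.minimalPeriod_dvd ?_
      unfold Function.IsPeriodicPt
      rw [Equiv.Perm.iterate_eq_pow]
      exact h3
    exact Nat.dvd_antisymm hd1' hd2
  have hconst : ∀ x : ZMod N, f x = f 0 := by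
    have hnat : ∀ k : ℕ, f (k : ZMod N) = f 0 := by
      intro k
      induction k with
      | zero => simp
      | succ k ih => push_cast; rw [hstep]; exact ih
    intro x
    have := hnat x.val
    rwa [ZMod.natCast_zmod_val] at this
  refine ⟨f 0, ?_, hfodd 0, ?_, ?_⟩
  · have := card_dvd_of_const_period z (f 0) (hfpos 0)
      (fun x => ?_) (fun x k hk hks hzk => ?_)
    · rwa [ZMod.card] at this
    · have : f x ∣ f 0 := (hconst x) ▸ dvd_refl _
      have hp : Function.IsPeriodicPt (⇑z) (f 0) x :=
        Function.isPeriodicPt_iff_minimalPeriod_dvd.mpr this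
      rw [← hiter]; exact hp
    · have : f x ∣ k := by
        refine Function.IsPeriodicPt.minimalPeriod_dvd ?_
        unfold Function.IsPeriodicPt
        rw [Equiv.Perm.iterate_eq_pow]; exact hzk
      rw [hconst x] at this
      exact absurd hzk (by
        have := Nat.le_of_dvd hk this
        omega)
  · ext x
    have : f x ∣ f 0 := (hconst x) ▸ dvd_refl _
    have hp : Function.IsPeriodicPt (⇑z) (f 0) x :=
      Function.isPeriodicPt_iff_minimalPeriod_dvd.mpr this
    simpa [hiter] using hp.eq
  · intro h1
    ext x
    have : f x = 1 := by rw [hconst x, h1]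
    have := Function.minimalPeriod_eq_one_iff_isFixedPt.mp this
    simpa using this.eq






/-- reduction mod 2^m -/
noncomputable def piH (h : 2 ^ m ∣ n) : ZMod n →+* ZMod (2 ^ m) :=
  ZMod.castHom h _

noncomputable def Efun (h : 2 ^ m ∣ n) (x : ZMod n) : ZMod n :=
  ((2 ^ m * 2 ^ (2 ^ m - (piH h x).val) : ℕ) : ZMod n)

lemma piH_natCast (h : 2 ^ m ∣ n) (a : ℕ) : piH h (a : ZMod n) = (a : ZMod (2 ^ m)) :=
  map_natCast _ a

lemma piH_E (h : 2 ^ m ∣ n) (x : ZMod n) : piH h (Efun h x) = 0 := by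
  rw [Efun, piH_natCast, ZMod.natCast_eq_zero_iff]
  exact dvd_mul_right _ _

lemma E_shift (h : 2 ^ m ∣ n) (x v : ZMod n) (hv : piH h v = 0) :
    Efun h (x + v) = Efun h x := by
  rw [Efun, Efun, map_add, hv, add_zero]

noncomputable def ystd (h : 2 ^ m ∣ n) : Equiv.Perm (ZMod n) where
  toFun x := x + Efun h x
  invFun x := x - Efun h x
  left_inv x := by
    show x + Efun h x - Efun h (x + Efun h x) = x
    rw [E_shift h x _ (piH_E h x)]; ring
  right_inv x := by
    show x - Efun h x + Efun h (x - Efun h x) = x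
    have : Efun h (x - Efun h x) = Efun h x := by
      rw [sub_eq_add_neg, E_shift h x _ (by rw [map_neg, piH_E, neg_zero])]
    rw [this]; ring

lemma ystd_apply (h : 2 ^ m ∣ n) (x : ZMod n) : ystd h x = x + Efun h x := rfl

lemma E_two (hp3 : 3 ≤ p) (hdvd : p ∣ 2 ^ 2 ^ m - 1) (hn : n = p * 2 ^ m)
    (h : 2 ^ m ∣ n) (x : ZMod n) : Efun h (x - 1) = 2 * Efun h x := by
  haveI : NeZero (2 ^ m) := ⟨pow_ne_zero m two_ne_zero⟩
  have hq1 : 1 ≤ 2 ^ m := Nat.one_le_two_pow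
  have hlt : (piH h x).val < 2 ^ m := ZMod.val_lt _
  have hpix : piH h (x - 1) = piH h x - 1 := by rw [map_sub, map_one]
  rcases Nat.eq_zero_or_pos (piH h x).val with h0 | h1
  · have hj : piH h x = 0 := (ZMod.val_eq_zero _).mp h0
    have hneg : piH h (x - 1) = -1 := by rw [hpix, hj, zero_sub]
    have hval : ((-1 : ZMod (2 ^ m))).val = 2 ^ m - 1 := by
      have e1 : (-1 : ZMod (2 ^ m)) = ((2 ^ m - 1 : ℕ) : ZMod (2 ^ m)) := by
        rw [Nat.cast_sub hq1, ZMod.natCast_self, Nat.cast_one, zero_sub]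
      rw [e1, ZMod.val_natCast_of_lt (by omega)]
    rw [Efun, Efun, hneg, hval, hj]
    have e2 : 2 ^ m - (2 ^ m - 1) = 1 := by omega
    have e3 : 2 ^ m - (0 : ZMod (2^m)).val = 2 ^ m := by rw [ZMod.val_zero]; omega
    rw [e2, e3]
    -- goal : ((2^m * 2^1 : ℕ) : ZMod n) = 2 * ((2^m * 2^(2^m) : ℕ) : ZMod n)
    have e4 : (2 : ZMod n) * ((2 ^ m * 2 ^ 2 ^ m : ℕ) : ZMod n)
        = ((2 * (2 ^ m * 2 ^ 2 ^ m) : ℕ) : ZMod n) := by push_cast; ring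
    rw [e4]
    rw [ZMod.natCast_eq_natCast_iff]
    obtain ⟨t, ht⟩ := hdvd
    have h2q : 1 ≤ 2 ^ 2 ^ m := Nat.one_le_two_pow
    refine (Nat.modEq_iff_dvd' (by nlinarith)).mpr ?_
    refine ⟨2 * t, ?_⟩
    have : 2 * (2 ^ m * 2 ^ 2 ^ m) - 2 ^ m * 2 ^ 1 = 2 ^ m * 2 * (2 ^ 2 ^ m - 1) := by
      rw [Nat.mul_sub]
      ring_nf
    rw [this, ht, hn]
    ring
  · have hval : (piH h x - 1).val = (piH h x).val - 1 := by
      have e1 : piH h x - 1 = (((piH h x).val - 1 : ℕ) : ZMod (2 ^ m)) := by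
        rw [Nat.cast_sub h1, Nat.cast_one, ZMod.natCast_zmod_val]
      rw [e1, ZMod.val_natCast_of_lt (by omega)]
    rw [Efun, Efun, hpix, hval]
    have e2 : 2 ^ m - ((piH h x).val - 1) = (2 ^ m - (piH h x).val) + 1 := by omega
    rw [e2]
    push_cast
    ring

lemma ystd_sol (hp3 : 3 ≤ p) (hdvd : p ∣ 2 ^ 2 ^ m - 1) (hn : n = p * 2 ^ m)
    (h : 2 ^ m ∣ n) (x : ZMod n) :
    ystd h (ystd h x) = ystd h (x - 1) + 1 := by
  rw [ystd_apply, ystd_apply, ystd_apply, E_shift h x _ (piH_E h x),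
    E_two hp3 hdvd hn h x]
  ring

lemma ystd_zero_ne (hp : p.Prime) (hp3 : 3 ≤ p) (hn : n = p * 2 ^ m)
    (h : 2 ^ m ∣ n) : ystd h 0 ≠ 0 := by
  haveI : NeZero (2 ^ m) := ⟨pow_ne_zero m two_ne_zero⟩
  intro hcon
  rw [ystd_apply, zero_add, Efun, map_zero, ZMod.val_zero, Nat.sub_zero] at hcon
  rw [ZMod.natCast_eq_zero_iff, hn] at hcon
  obtain ⟨t, ht⟩ := hcon
  have h2 : p * t = 2 ^ 2 ^ m := by
    have := ht
    have hpos : 0 < 2 ^ m := Nat.pow_pos (n := m) (by norm_num)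
    nlinarith [Nat.pow_pos (n := m) (show 0 < 2 by norm_num)]
  have : p ∣ 2 ^ 2 ^ m := ⟨t, h2.symm⟩
  have := Nat.Prime.dvd_of_dvd_pow hp this
  have := Nat.le_of_dvd (by norm_num) this
  omega








-- pipeline
lemma pipeline [NeZero n] (hp : p.Prime) (hp3 : 3 ≤ p) (hdvd : p ∣ 2 ^ 2 ^ m - 1)
    (hn : n = p * 2 ^ m) (h : 2 ^ m ∣ n)
    (z : Equiv.Perm (ZMod n)) (hz : ∀ x, z (z x) = z (x - 1) + 1) :
    z ^ p = 1 ∧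
    (∀ x : ZMod n, z (x - 1) - (x - 1) = 2 * (z x - x)) ∧
    (∀ (k : ℕ) (x : ZMod n), (z ^ k) x = x + (k : ZMod n) * (z x - x)) ∧
    (∀ x : ZMod n, piH h (z x) = piH h x) := by
  haveI : NeZero (2 ^ m) := ⟨pow_ne_zero m two_ne_zero⟩
  -- step 1 : z ^ p = 1
  have hzp : z ^ p = 1 := by
    obtain ⟨s, hsdvd, hsodd, hzs, hs1⟩ := std_order z hz
    have hcop2 : Nat.Coprime s 2 := by
      have : ¬ (2 ∣ s) := by rcases hsodd with ⟨j, hj⟩; omega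
      exact ((Nat.Prime.coprime_iff_not_dvd Nat.prime_two).mpr this).symm
    have hcop : Nat.Coprime s (2 ^ m) := Nat.Coprime.pow_right m hcop2
    rw [hn] at hsdvd
    have hsp : s ∣ p := Nat.Coprime.dvd_of_dvd_mul_right hcop hsdvd
    rcases (Nat.Prime.eq_one_or_self_of_dvd hp s hsp) with h1 | h1
    · rw [hs1 h1, one_pow]
    · rw [← h1, hzs]
  -- step 2 : z commutes with translation by 2^m
  have hzpow : z ^ (2 ^ 2 ^ m) = z := by
    obtain ⟨t, ht⟩ := hdvd
    have h2q : 1 ≤ 2 ^ 2 ^ m := Nat.one_le_two_pow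
    have he : 2 ^ 2 ^ m = p * t + 1 := by omega
    rw [he, pow_add, pow_mul, hzp, one_pow, pow_one, one_mul]
  have hcomm0 : ∀ x : ZMod n, z x = z (x - ((2 ^ m : ℕ) : ZMod n)) + ((2 ^ m : ℕ) : ZMod n) := by
    intro x
    have := sol_pow2 z hz (2 ^ m) 1 x
    rw [mul_one, hzpow, pow_one] at this
    exact this
  have hcomm : ∀ x : ZMod n, z (x + ((2 ^ m : ℕ) : ZMod n)) = z x + ((2 ^ m : ℕ) : ZMod n) := by
    intro x
    have := hcomm0 (x + ((2 ^ m : ℕ) : ZMod n))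
    rwa [add_sub_cancel_right] at this
  have hcommN : ∀ (t : ℕ) (x : ZMod n),
      z (x + ((2 ^ m * t : ℕ) : ZMod n)) = z x + ((2 ^ m * t : ℕ) : ZMod n) := by
    intro t
    induction t with
    | zero => intro x; simp
    | succ t ih =>
      intro x
      have e1 : ((2 ^ m * (t + 1) : ℕ) : ZMod n)
          = ((2 ^ m * t : ℕ) : ZMod n) + ((2 ^ m : ℕ) : ZMod n) := by push_cast; ring
      rw [e1, ← add_assoc, hcomm, ih]
      ring
  have hker : ∀ v : ZMod n, piH h v = 0 → ∃ u : ℕ, v = ((2 ^ m * u : ℕ) : ZMod n) := by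
    intro v hv
    have hval : piH h v = ((v.val : ℕ) : ZMod (2 ^ m)) := by
      conv_lhs => rw [← ZMod.natCast_zmod_val v]
      rw [piH_natCast]
    rw [hval, ZMod.natCast_eq_zero_iff] at hv
    obtain ⟨u, hu⟩ := hv
    exact ⟨u, by rw [← hu, ZMod.natCast_zmod_val]⟩
  have hπz : ∀ (x v : ZMod n), piH h v = 0 → z (x + v) = z x + v := by
    intro x v hv
    obtain ⟨u, rfl⟩ := hker v hv
    exact hcommN u x
  have hπzinv : ∀ (x v : ZMod n), piH h v = 0 → z⁻¹ (x + v) = z⁻¹ x + v := by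
    intro x v hv
    have h1 := hπz (z⁻¹ x) v hv
    rw [← Equiv.Perm.mul_apply z z⁻¹, mul_inv_cancel, Equiv.Perm.one_apply] at h1
    rw [← h1, ← Equiv.Perm.mul_apply z⁻¹ z, inv_mul_cancel, Equiv.Perm.one_apply]
  have hsame : ∀ (w w' : ZMod n), piH h w = piH h w' → piH h (z w) = piH h (z w') := by
    intro w w' hww
    have hv : piH h (w' - w) = 0 := by rw [map_sub, hww, sub_self]
    have := hπz w (w' - w) hv
    rw [add_sub_cancel] at this
    rw [this, map_add, hv, add_zero]
  have hsameinv : ∀ (w w' : ZMod n), piH h w = piH h w' → piH h (z⁻¹ w) = piH h (z⁻¹ w') := by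
    intro w w' hww
    have hv : piH h (w' - w) = 0 := by rw [map_sub, hww, sub_self]
    have := hπzinv w (w' - w) hv
    rw [add_sub_cancel] at this
    rw [this, map_add, hv, add_zero]
  have hliftπ : ∀ w : ZMod n, piH h ((((piH h w).val : ℕ)) : ZMod n) = piH h w := by
    intro w
    rw [piH_natCast, ZMod.natCast_zmod_val]
  have hliftj : ∀ j : ZMod (2 ^ m), piH h (((j.val : ℕ)) : ZMod n) = j := by
    intro j
    rw [piH_natCast, ZMod.natCast_zmod_val]
  -- the induced permutation on ZMod (2^m)
  set σ : Equiv.Perm (ZMod (2 ^ m)) :=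
    { toFun := fun j => piH h (z ((j.val : ℕ) : ZMod n))
      invFun := fun j => piH h (z⁻¹ ((j.val : ℕ) : ZMod n))
      left_inv := by
        intro j
        simp only []
        rw [hsameinv _ (z ((j.val : ℕ) : ZMod n)) (by rw [hliftπ]),
          ← Equiv.Perm.mul_apply z⁻¹ z, inv_mul_cancel, Equiv.Perm.one_apply, hliftj]
      right_inv := by
        intro j
        simp only []
        rw [hsame _ (z⁻¹ ((j.val : ℕ) : ZMod n)) (by rw [hliftπ]),
          ← Equiv.Perm.mul_apply z z⁻¹, mul_inv_cancel, Equiv.Perm.one_apply, hliftj] } with hσdef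
  have hσapp : ∀ j : ZMod (2 ^ m), σ j = piH h (z ((j.val : ℕ) : ZMod n)) := fun j => rfl
  have hσsol : ∀ j : ZMod (2 ^ m), σ (σ j) = σ (j - 1) + 1 := by
    intro j
    rw [hσapp, hσapp, hσapp]
    rw [hsame _ (z ((j.val : ℕ) : ZMod n)) (by rw [hliftπ])]
    rw [hz]
    have e1 : piH h (((j - 1).val : ℕ) : ZMod n) = piH h (((j.val : ℕ) : ZMod n) - 1) := by
      rw [hliftj, map_sub, hliftj, map_one]
    rw [hsame _ (((j.val : ℕ) : ZMod n) - 1) e1, map_add, map_one]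
  have hσ1 : σ = 1 := by
    obtain ⟨s, hsdvd, hsodd, hzs, hs1⟩ := std_order σ hσsol
    have hcop2 : Nat.Coprime s 2 := by
      have : ¬ (2 ∣ s) := by rcases hsodd with ⟨j, hj⟩; omega
      exact ((Nat.Prime.coprime_iff_not_dvd Nat.prime_two).mpr this).symm
    have hcop : Nat.Coprime s (2 ^ m) := Nat.Coprime.pow_right m hcop2
    exact hs1 (Nat.dvd_one.mp (hcop ▸ Nat.dvd_gcd dvd_rfl hsdvd))
  have hfix : ∀ x : ZMod n, piH h (z x) = piH h x := by
    intro x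
    have h1 : piH h (z x) = piH h (z (((piH h x).val : ℕ) : ZMod n)) :=
      hsame _ _ (by rw [hliftπ])
    rw [h1]
    have h2 : σ (piH h x) = piH h x := by rw [hσ1]; rfl
    rw [hσapp] at h2
    exact h2
  -- c-function facts
  have hπc : ∀ x : ZMod n, piH h (z x - x) = 0 := by
    intro x; rw [map_sub, hfix, sub_self]
  have hcshift : ∀ (x v : ZMod n), piH h v = 0 → z (x + v) - (x + v) = z x - x := by
    intro x v hv; rw [hπz x v hv]; ring
  have hrec : ∀ x : ZMod n, z (x - 1) - (x - 1) = 2 * (z x - x) := by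
    intro x
    have h1 := hz x
    have h2 : z (z x) = z x + (z x - x) := by
      have e : z x = x + (z x - x) := by ring
      conv_lhs => rw [e]
      rw [hπz x _ (hπc x)]
    have h3 : z x + (z x - x) = z (x - 1) + 1 := by rw [← h2, h1]
    have h4 : z (x - 1) = z x + (z x - x) - 1 := by rw [h3]; ring
    rw [h4]; ring
  have hpow : ∀ (k : ℕ) (x : ZMod n), (z ^ k) x = x + (k : ZMod n) * (z x - x) := by
    intro k
    induction k with
    | zero => intro x; simp
    | succ k ih =>
      intro x
      rw [pow_succ', Equiv.Perm.mul_apply, ih]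
      have hv : piH h ((k : ZMod n) * (z x - x)) = 0 := by
        rw [map_mul, hπc, mul_zero]
      rw [hπz x _ hv]
      push_cast
      ring
  exact ⟨hzp, hrec, hpow, hfix⟩





-- group-form bridge
lemma sol_iff [NeZero n] (w : Equiv.Perm (ZMod n)) :
    (Equiv.addRight (1 : ZMod n)) * w * (Equiv.addRight (1 : ZMod n))⁻¹ = w ^ 2 ↔
    (∀ x : ZMod n, w (w x) = w (x - 1) + 1) := by
  rw [Equiv.ext_iff]
  constructor
  · intro hgroup x
    have := (hgroup x).symm
    simpa [Equiv.Perm.mul_apply, pow_two, Equiv.Perm.inv_def, sub_eq_add_neg] using this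
  · intro hpt x
    have := (hpt x).symm
    simpa [Equiv.Perm.mul_apply, pow_two, Equiv.Perm.inv_def, sub_eq_add_neg] using this

lemma conj_sq_pow {G : Type*} [Group G] {a w : G} (hw : a * w * a⁻¹ = w ^ 2) (k : ℕ) :
    a * w ^ k * a⁻¹ = (w ^ k) ^ 2 := by
  rw [← conj_pow, hw, ← pow_mul, ← pow_mul, mul_comm k 2]

lemma sol_pow_pointwise [NeZero n] (w : Equiv.Perm (ZMod n))
    (hw : ∀ x : ZMod n, w (w x) = w (x - 1) + 1) (k : ℕ) :
    ∀ x : ZMod n, (w ^ k) ((w ^ k) x) = (w ^ k) (x - 1) + 1 :=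
  (sol_iff _).mp (conj_sq_pow ((sol_iff w).mpr hw) k)

lemma std_master [NeZero n] (hp : p.Prime) (hp3 : 3 ≤ p) (hdvd : p ∣ 2 ^ 2 ^ m - 1)
    (hn : n = p * 2 ^ m) (h : 2 ^ m ∣ n)
    (z : Equiv.Perm (ZMod n)) (hz : ∀ x, z (z x) = z (x - 1) + 1) :
    ∃ k : ℕ, z = (ystd h) ^ k := by
  haveI : NeZero (2 ^ m) := ⟨pow_ne_zero m two_ne_zero⟩
  obtain ⟨hzp, hrecz, hpowz, hfixz⟩ := pipeline hp hp3 hdvd hn h z hz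
  obtain ⟨hyp, hrecy, hpowy, hfixy⟩ :=
    pipeline hp hp3 hdvd hn h (ystd h) (ystd_sol hp3 hdvd hn h)
  -- z 0 is a multiple of 2^m
  have hc0 : piH h (z 0) = 0 := by rw [hfixz 0, map_zero]
  have hval : piH h (z 0) = (((z 0).val : ℕ) : ZMod (2 ^ m)) := by
    conv_lhs => rw [← ZMod.natCast_zmod_val (z 0)]
    rw [piH_natCast]
  rw [hval, ZMod.natCast_eq_zero_iff] at hc0
  obtain ⟨u, hu⟩ := hc0
  have hz0 : z 0 = ((2 ^ m * u : ℕ) : ZMod n) := by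
    rw [← ZMod.natCast_zmod_val (z 0), hu]
  refine ⟨u, ?_⟩
  set y := ystd h
  obtain ⟨_, hrecyk, _, _⟩ :=
    pipeline hp hp3 hdvd hn h (y ^ u) (sol_pow_pointwise y (ystd_sol hp3 hdvd hn h) u)
  -- value of y ^ u at 0
  have hy0 : y 0 = ((2 ^ m * 2 ^ 2 ^ m : ℕ) : ZMod n) := by
    rw [ystd_apply, Efun, map_zero, ZMod.val_zero, Nat.sub_zero, zero_add]
  have hyk0 : (y ^ u) 0 = z 0 := by
    have h1 := hpowy u 0
    rw [sub_zero, zero_add, hy0] at h1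
    rw [h1, hz0]
    have e1 : (u : ZMod n) * ((2 ^ m * 2 ^ 2 ^ m : ℕ) : ZMod n)
        = ((u * (2 ^ m * 2 ^ 2 ^ m) : ℕ) : ZMod n) := by push_cast; ring
    rw [e1, ZMod.natCast_eq_natCast_iff]
    obtain ⟨t, ht⟩ := hdvd
    have h2q : 1 ≤ 2 ^ 2 ^ m := Nat.one_le_two_pow
    refine ((Nat.modEq_iff_dvd' (by nlinarith)).mpr ?_).symm
    refine ⟨u * t, ?_⟩
    have e2 : u * (2 ^ m * 2 ^ 2 ^ m) - 2 ^ m * u = 2 ^ m * u * (2 ^ 2 ^ m - 1) := by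
      rw [Nat.mul_sub]; ring_nf
    rw [e2, ht, hn]; ring
  -- uniqueness by downward recursion
  have huniq : ∀ j : ℕ, z ((0 : ZMod n) - (j : ZMod n)) - ((0 : ZMod n) - (j : ZMod n))
      = (y ^ u) ((0 : ZMod n) - (j : ZMod n)) - ((0 : ZMod n) - (j : ZMod n)) := by
    intro j
    induction j with
    | zero => simpa using congrArg (fun w => w - (0 : ZMod n)) hyk0.symm
    | succ j ih =>
      have e1 : (0 : ZMod n) - ((j + 1 : ℕ) : ZMod n)
          = ((0 : ZMod n) - (j : ZMod n)) - 1 := by push_cast; ring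
      rw [e1, hrecz, hrecyk, ih]
  ext x
  have hxval : x.val ≤ n := le_of_lt (ZMod.val_lt x)
  have hx : (0 : ZMod n) - ((n - x.val : ℕ) : ZMod n) = x := by
    rw [Nat.cast_sub hxval, ZMod.natCast_self, ZMod.natCast_zmod_val]
    ring
  have := huniq (n - x.val)
  rw [hx] at this
  have := sub_left_inj.mp this
  exact this


lemma assembly {G : Type*} [Group G] {p : ℕ} (hp : p.Prime) (hp3 : 3 ≤ p) (S : Set G) (y : G)
    (hy1 : y ≠ 1) (hyp : y ^ p = 1) (hin : ∀ k : ℕ, y ^ k ∈ S)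
    (hout : ∀ z ∈ S, ∃ k : ℕ, z = y ^ k) :
    (∀ w : G, w ≠ 1 → w ∈ S →
      w ^ p = 1 ∧ S = {z : G | ∃ k : ℕ, 1 ≤ k ∧ k ≤ p ∧ z = w ^ k}) ∧
    S.ncard = p := by
  haveI : Fact p.Prime := ⟨hp⟩
  have hp1 : 1 < p := hp.one_lt
  have hordy : orderOf y = p := orderOf_eq_prime hyp hy1
  have hred : ∀ (g : G), g ^ p = 1 → ∀ a : ℕ, g ^ a = g ^ (a % p) := by
    intro g hg a
    conv_lhs => rw [← Nat.mod_add_div a p]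
    rw [pow_add, pow_mul, hg, one_pow, mul_one]
  have main : ∀ w : G, w ≠ 1 → w ∈ S →
      w ^ p = 1 ∧ S = {z : G | ∃ k : ℕ, 1 ≤ k ∧ k ≤ p ∧ z = w ^ k} := by
    intro w hw1 hwS
    obtain ⟨j, rfl⟩ := hout w hwS
    have hpj : ¬ p ∣ j := by
      rintro ⟨t, rfl⟩
      rw [pow_mul, hyp, one_pow] at hw1
      exact hw1 rfl
    have hwp : (y ^ j) ^ p = 1 := by
      rw [← pow_mul, mul_comm, pow_mul, hyp, one_pow]
    refine ⟨hwp, ?_⟩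
    have hcop : Nat.Coprime j p := ((Nat.Prime.coprime_iff_not_dvd hp).mpr hpj).symm
    have heuler : j ^ (p - 1) % p = 1 := by
      have h2 := Nat.ModEq.pow_totient hcop
      rw [Nat.totient_prime hp] at h2
      have h1 : 1 % p = 1 := Nat.mod_eq_of_lt hp1
      rw [Nat.ModEq] at h2
      omega
    have hyw : (y ^ j) ^ (j ^ (p - 2)) = y := by
      have e1 : j * j ^ (p - 2) = j ^ (p - 1) := by
        have e2 : p - 1 = (p - 2) + 1 := by omega
        rw [e2, pow_succ']
      rw [← pow_mul, e1, hred y hyp, heuler, pow_one]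
    ext z
    simp only [Set.mem_setOf_eq]
    constructor
    · intro hz
      obtain ⟨i, rfl⟩ := hout z hz
      have hzi : y ^ i = (y ^ j) ^ (j ^ (p - 2) * i) := by
        rw [pow_mul, hyw]
      by_cases h0 : (j ^ (p - 2) * i) % p = 0
      · exact ⟨p, by omega, le_refl p, by rw [hzi, hred _ hwp, h0, pow_zero, hwp]⟩
      · exact ⟨(j ^ (p - 2) * i) % p, by omega,
          le_of_lt (Nat.mod_lt _ (by omega)), by rw [hzi, hred _ hwp]⟩
    · rintro ⟨k, _, _, rfl⟩
      have e3 : ((y ^ j) ^ k) = y ^ (j * k) := by rw [pow_mul]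
      rw [e3]; exact hin _
  refine ⟨main, ?_⟩
  have hyS : y ∈ S := by have := hin 1; rwa [pow_one] at this
  obtain ⟨_, hSeq⟩ := main y hy1 hyS
  have himg : {z : G | ∃ k : ℕ, 1 ≤ k ∧ k ≤ p ∧ z = y ^ k}
      = (fun k : ℕ => y ^ k) '' (Set.Icc 1 p) := by
    ext z
    simp only [Set.mem_setOf_eq, Set.mem_image, Set.mem_Icc]
    constructor
    · rintro ⟨k, h1, h2, rfl⟩; exact ⟨k, ⟨h1, h2⟩, rfl⟩
    · rintro ⟨k, ⟨h1, h2⟩, rfl⟩; exact ⟨k, h1, h2, rfl⟩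
  have hinj : Set.InjOn (fun k : ℕ => y ^ k) (Set.Icc 1 p) := by
    intro a ha b hb hab
    simp only [Set.mem_Icc] at ha hb
    have := pow_eq_pow_iff_modEq.mp hab
    rw [hordy, Nat.ModEq] at this
    rcases ha with ⟨ha1, ha2⟩
    rcases hb with ⟨hb1, hb2⟩
    have hap : a % p = if a = p then 0 else a := by
      by_cases hcase : a = p
      · simp [hcase, Nat.mod_self]
      · simp only [hcase, if_false]; exact Nat.mod_eq_of_lt (by omega)
    have hbp : b % p = if b = p then 0 else b := by
      by_cases hcase : b = p
      · simp [hcase, Nat.mod_self]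
      · simp only [hcase, if_false]; exact Nat.mod_eq_of_lt (by omega)
    rw [hap, hbp] at this
    split_ifs at this <;> omega
  rw [hSeq, himg, Set.ncard_image_of_injOn hinj, ← Finset.coe_Icc,
    Set.ncard_coe_finset, Nat.card_Icc]
  omega

end Main
end Stmt15Aux

open Stmt15Aux in
/-- Theorem (B2). Let `p ≥ 3` be a prime divisor of `2^{2^m} - 1` and `n = p·2^m`,
and let `α ∈ Sₙ` be a single `n`-cycle. Then `α ∘ y ∘ α⁻¹ = y²` has a non-trivial
solution; for any non-trivial solution `y ≠ 1` one has `y^p = 1` and the set of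
all solutions is exactly `{y, y², …, y^{p-1}, y^p = 1}`; in particular the
equation has exactly `p` solutions. -/

theorem stmt_15 (m p n : ℕ) (hp : p.Prime) (hp3 : 3 ≤ p)
    (hdvd : p ∣ 2 ^ 2 ^ m - 1) (hn : n = p * 2 ^ m) (α : Equiv.Perm (Fin n))
    (hcyc : α.IsCycle) (hsupp : α.support = Finset.univ) :
    (∃ y : Equiv.Perm (Fin n), y ≠ 1 ∧ α * y * α⁻¹ = y ^ 2) ∧
    (∀ y : Equiv.Perm (Fin n), y ≠ 1 → α * y * α⁻¹ = y ^ 2 →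
      y ^ p = 1 ∧
      {z : Equiv.Perm (Fin n) | α * z * α⁻¹ = z ^ 2} =
        {z : Equiv.Perm (Fin n) | ∃ k : ℕ, 1 ≤ k ∧ k ≤ p ∧ z = y ^ k}) ∧
    Set.ncard {z : Equiv.Perm (Fin n) | α * z * α⁻¹ = z ^ 2} = p := by
  have hq0 : 0 < 2 ^ m := Nat.pow_pos (n := m) (by norm_num)
  have hn3 : 3 ≤ n := by
    rw [hn]; calc 3 ≤ p := hp3
    _ = p * 1 := (mul_one p).symm
    _ ≤ p * 2 ^ m := Nat.mul_le_mul_left p hq0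
  haveI : NeZero n := ⟨by omega⟩
  haveI : Fact (1 < n) := ⟨by omega⟩
  have hqn : 2 ^ m ∣ n := by rw [hn]; exact dvd_mul_left _ _
  -- the equivalence Fin n ≃ ZMod n
  have hcard : Fintype.card (Fin n) = Fintype.card (ZMod n) := by
    rw [Fintype.card_fin, ZMod.card]
  let e0 : Fin n ≃ ZMod n := Fintype.equivOfCardEq hcard
  let Φ0 : Equiv.Perm (Fin n) ≃* Equiv.Perm (ZMod n) :=
    { toEquiv := e0.permCongr
      map_mul' := by
        intro a b
        ext x
        simp [Equiv.permCongr_apply] }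
  have hΦ0app : ∀ (a : Equiv.Perm (Fin n)) (x : Fin n), Φ0 a (e0 x) = e0 (a x) := by
    intro a x
    show e0.permCongr a (e0 x) = e0 (a x)
    simp [Equiv.permCongr_apply]
  set T : Equiv.Perm (ZMod n) := Equiv.addRight (1 : ZMod n) with hT
  have hTapp : ∀ x : ZMod n, T x = x + 1 := fun x => rfl
  have hTpow : ∀ (k : ℕ) (x : ZMod n), (T ^ k) x = x + (k : ZMod n) := by
    intro k
    induction k with
    | zero => intro x; simp
    | succ k ih =>
      intro x
      rw [pow_succ, Equiv.Perm.mul_apply, hTapp, ih]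
      push_cast
      ring
  have hTne : ∀ x : ZMod n, T x ≠ x := by
    intro x hx
    rw [hTapp] at hx
    have h10 : (1 : ZMod n) = 0 := by
      have h2 : x + 1 = x + 0 := by simpa using hx
      exact add_left_cancel h2
    exact one_ne_zero h10
  have hTcyc : T.IsCycle := by
    refine ⟨0, hTne 0, ?_⟩
    intro y hy
    refine ⟨(y.val : ℤ), ?_⟩
    rw [zpow_natCast, hTpow, zero_add, ZMod.natCast_zmod_val]
  -- α transported to ZMod n
  set α₁ : Equiv.Perm (ZMod n) := Φ0 α with hα₁
  have hα₁app : ∀ x : ZMod n, α₁ x = e0 (α (e0.symm x)) := by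
    intro x
    show e0.permCongr α x = _
    simp [Equiv.permCongr_apply]
  have hαne : ∀ x : Fin n, α x ≠ x := by
    intro x
    have : x ∈ α.support := by rw [hsupp]; exact Finset.mem_univ x
    exact Equiv.Perm.mem_support.mp this
  have hα₁ne : ∀ x : ZMod n, α₁ x ≠ x := by
    intro x hx
    rw [hα₁app] at hx
    have := hαne (e0.symm x)
    apply this
    have := congrArg e0.symm hx
    rwa [Equiv.symm_apply_apply] at this
  have hα₁cyc : α₁.IsCycle := by
    obtain ⟨x, hx, hall⟩ := hcyc
    refine ⟨e0 x, ?_, ?_⟩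
    · rw [hΦ0app]
      intro hc
      exact hx (e0.injective hc)
    · intro y hy
      have hy' : α (e0.symm y) ≠ e0.symm y := by
        intro hc
        apply hy
        rw [hα₁app, hc, Equiv.apply_symm_apply]
      obtain ⟨i, hi⟩ := hall (y := e0.symm y) hy'
      refine ⟨i, ?_⟩
      have : α₁ ^ i = Φ0 (α ^ i) := by rw [map_zpow]
      rw [this, hΦ0app, hi, Equiv.apply_symm_apply]
  have hTsupp : T.support = Finset.univ := by
    ext x
    simp [Equiv.Perm.mem_support, hTne x]
  have hα₁supp : α₁.support = Finset.univ := by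
    ext x
    simp [Equiv.Perm.mem_support, hα₁ne x]
  have hconj : IsConj α₁ T :=
    hα₁cyc.isConj hTcyc (by rw [hTsupp, hα₁supp])
  obtain ⟨g, hg⟩ := isConj_iff.mp hconj
  let Φ : Equiv.Perm (Fin n) ≃* Equiv.Perm (ZMod n) := Φ0.trans (MulAut.conj g)
  have hΦα : Φ α = T := by
    show (MulAut.conj g) (Φ0 α) = T
    rw [MulAut.conj_apply]
    exact hg
  have hkey : ∀ z : Equiv.Perm (Fin n), Φ (α * z * α⁻¹) = T * Φ z * T⁻¹ := by
    intro z
    rw [map_mul, map_mul, map_inv, hΦα]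
  have hsol_iff : ∀ z : Equiv.Perm (Fin n),
      (α * z * α⁻¹ = z ^ 2) ↔ (T * Φ z * T⁻¹ = (Φ z) ^ 2) := by
    intro z
    constructor
    · intro hz
      rw [← hkey, hz, map_pow]
    · intro hz
      apply Φ.injective
      rw [hkey, hz, map_pow]
  -- the distinguished solution
  set y₀ : Equiv.Perm (ZMod n) := ystd hqn with hy₀
  have hy₀sol : T * y₀ * T⁻¹ = y₀ ^ 2 := (sol_iff y₀).mpr (ystd_sol hp3 hdvd hn hqn)
  set y' : Equiv.Perm (Fin n) := Φ.symm y₀ with hy'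
  have hΦy' : Φ y' = y₀ := Φ.apply_symm_apply y₀
  have hy'1 : y' ≠ 1 := by
    intro hc
    have : y₀ = 1 := by rw [← hΦy', hc, map_one]
    have h0 := ystd_zero_ne hp hp3 hn hqn
    rw [← hy₀] at h0
    apply h0
    rw [this]
    rfl
  set S : Set (Equiv.Perm (Fin n)) := {z : Equiv.Perm (Fin n) | α * z * α⁻¹ = z ^ 2} with hS
  have hy'in : ∀ k : ℕ, y' ^ k ∈ S := by
    intro k
    show α * y' ^ k * α⁻¹ = (y' ^ k) ^ 2
    rw [hsol_iff, map_pow, hΦy']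
    exact conj_sq_pow hy₀sol k
  have hy'p : y' ^ p = 1 := by
    apply Φ.injective
    rw [map_pow, hΦy', map_one]
    exact (pipeline hp hp3 hdvd hn hqn y₀ (ystd_sol hp3 hdvd hn hqn)).1
  have hout : ∀ z ∈ S, ∃ k : ℕ, z = y' ^ k := by
    intro z hz
    have hz' : T * Φ z * T⁻¹ = (Φ z) ^ 2 := (hsol_iff z).mp hz
    have hzpt := (sol_iff (Φ z)).mp hz'
    obtain ⟨k, hk⟩ := std_master hp hp3 hdvd hn hqn (Φ z) hzpt
    refine ⟨k, Φ.injective ?_⟩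
    rw [map_pow, hΦy', hk]
  obtain ⟨hmain, hcount⟩ := assembly hp hp3 S y' hy'1 hy'p hy'in hout
  refine ⟨⟨y', hy'1, by have := hy'in 1; rwa [pow_one] at this⟩, ?_, hcount⟩
  intro y hy1 hysol
  exact hmain y hy1 hysol
end

section
/- Let α = (1,2,3,4,5,6)∘(7,8,9,10,11,12) ∈ S₁₂, a product of two disjoint cycles of length 6. Set y₁ = (1,3,5)∘(2,6,4) and y₂ = (7,9,11)∘(8,12,10). Then y₁∘y₂ = y₂∘y₁, y₁³ = y₂³ = 1, and the set of solutions of α ∘ y ∘ α⁻¹ = y² in S₁₂ is exactly { y₁^i ∘ y₂^j : 0 ≤ i, j ≤ 2 }; in particular the equation has exactly 9 solutions, 8 of them non-trivial. -/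
set_option maxRecDepth 40000
set_option synthInstance.maxSize 2000
set_option synthInstance.maxHeartbeats 1000000
set_option maxHeartbeats 1600000

namespace Stmt17

def pα : Equiv.Perm (Fin 12) :=
  ([0, 1, 2, 3, 4, 5] : List (Fin 12)).formPerm *
    ([6, 7, 8, 9, 10, 11] : List (Fin 12)).formPerm
def py₁ : Equiv.Perm (Fin 12) :=
  ([0, 2, 4] : List (Fin 12)).formPerm * ([1, 5, 3] : List (Fin 12)).formPerm
def py₂ : Equiv.Perm (Fin 12) :=
  ([6, 8, 10] : List (Fin 12)).formPerm * ([7, 11, 9] : List (Fin 12)).formPerm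

def afn : Fin 12 → Fin 12 := fun x => match x.val with
  | 0=>1 | 1=>2 | 2=>3 | 3=>4 | 4=>5 | 5=>0 | 6=>7 | 7=>8 | 8=>9 | 9=>10 | 10=>11 | _=>6
def bfn : Fin 12 → Fin 12 := fun x => afn (afn x)
def blk : Fin 12 → Fin 4 := fun x => match x.val with
  | 0=>0 | 2=>0 | 4=>0 | 1=>1 | 3=>1 | 5=>1 | 6=>2 | 8=>2 | 10=>2 | _=>3
def tauf : Fin 4 → Fin 4 := fun k => match k.val with
  | 0=>1 | 1=>0 | 2=>3 | _=>2
def tbl (a b c d : Fin 4) : Fin 4 → Fin 4 := fun k => match k.val with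
  | 0=>a | 1=>b | 2=>c | _=>d
def gfn (t u v w : Fin 12) : Fin 12 → Fin 12 := fun x => match x.val with
  | 0=>t | 1=>u | 2=>bfn t | 3=>bfn u | 4=>bfn (bfn t) | 5=>bfn (bfn u)
  | 6=>v | 7=>w | 8=>bfn v | 9=>bfn w | 10=>bfn (bfn v) | _=>bfn (bfn w)

lemma hα6 : pα ^ 6 = 1 := by decide
lemma happly : ∀ x : Fin 12, pα x = afn x := by decide
lemma hbapply : ∀ x : Fin 12, (pα ^ 2) x = bfn x := by decide
lemma hblkb : ∀ z : Fin 12, blk (bfn z) = blk z := by decide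
lemma hblkt : ∀ z : Fin 12, blk (afn z) = tauf (blk z) := by decide
lemma hall : ∀ z : Fin 12, z = 0 ∨ z = 1 ∨ z = 2 ∨ z = 3 ∨ z = 4 ∨ z = 5 ∨ z = 6 ∨
    z = 7 ∨ z = 8 ∨ z = 9 ∨ z = 10 ∨ z = 11 := by decide
lemma hall4 : ∀ k : Fin 4, k = 0 ∨ k = 1 ∨ k = 2 ∨ k = 3 := by decide
lemma blk0cases : ∀ z : Fin 12, blk z = 0 → z = 0 ∨ z = 2 ∨ z = 4 := by decide
lemma blk2cases : ∀ z : Fin 12, blk z = 2 → z = 6 ∨ z = 8 ∨ z = 10 := by decide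
lemma binv1 : ∀ z : Fin 12, bfn z = 1 → z = 5 := by decide
lemma bbinv1 : ∀ z : Fin 12, bfn (bfn z) = 1 → z = 3 := by decide
lemma binv7 : ∀ z : Fin 12, bfn z = 7 → z = 11 := by decide
lemma bbinv7 : ∀ z : Fin 12, bfn (bfn z) = 7 → z = 9 := by decide
lemma memhigh : ∀ z : Fin 12, ¬ z.val < 6 → z ∈ ({6,7,8,9,10,11} : Finset (Fin 12)) := by decide
lemma memlow : ∀ z : Fin 12, z.val < 6 → z ∈ ({0,1,2,3,4,5} : Finset (Fin 12)) := by decide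

lemma decideπ : ∀ a b c d : Fin 4,
    (∀ k : Fin 4, tbl a b c d (tbl a b c d (tbl a b c d k)) = k) →
    (∀ k : Fin 4, tbl a b c d (tauf (tbl a b c d k)) = tauf k) →
    a = 0 ∧ b = 1 ∧ c = 2 ∧ d = 3 := by decide



lemma piter (g : Equiv.Perm (Fin 12)) (z : Fin 12) (h : g z = z) : ∀ m, (g ^ m) z = z := by
  intro m
  induction m with
  | zero => simp
  | succ k ih => rw [pow_succ, Equiv.Perm.mul_apply, h]; exact ih

lemma fixchain (s : Equiv.Perm (Fin 12)) (hs : pα * s * pα⁻¹ = s ^ 2) (h63 : s ^ 63 = 1) :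
    ∀ x, s x = x ↔ s (pα x) = pα x := by
  have h64 : s ^ 64 = s := by
    have h : s ^ 64 = s ^ 63 * s := by rw [← pow_succ]
    rw [h, h63, one_mul]
  have hs2 : ∀ z, (s ^ 2) (pα z) = pα (s z) := by
    intro z
    rw [← hs]
    simp [Equiv.Perm.mul_apply]
  intro x
  constructor
  · intro hx
    have h2 : (s ^ 2) (pα x) = pα x := by rw [hs2, hx]
    have h32 : ((s ^ 2) ^ 32) (pα x) = pα x := piter _ _ h2 32
    rw [← pow_mul] at h32
    norm_num at h32
    rw [h64] at h32
    exact h32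
  · intro hx
    have h2 : (s ^ 2) (pα x) = pα x := by
      rw [sq, Equiv.Perm.mul_apply, hx, hx]
    exact pα.injective ((hs2 x).symm.trans h2)

lemma fixA (s : Equiv.Perm (Fin 12)) (hs : pα * s * pα⁻¹ = s ^ 2) (h63 : s ^ 63 = 1) :
    ∀ x z : Fin 12, x.val < 6 → z.val < 6 → s x = x → s z = z := by
  have hc := fixchain s hs h63
  have i01 : s 0 = 0 ↔ s 1 = 1 := by have := hc 0; rwa [show pα 0 = 1 from by decide] at this
  have i12 : s 1 = 1 ↔ s 2 = 2 := by have := hc 1; rwa [show pα 1 = 2 from by decide] at this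
  have i23 : s 2 = 2 ↔ s 3 = 3 := by have := hc 2; rwa [show pα 2 = 3 from by decide] at this
  have i34 : s 3 = 3 ↔ s 4 = 4 := by have := hc 3; rwa [show pα 3 = 4 from by decide] at this
  have i45 : s 4 = 4 ↔ s 5 = 5 := by have := hc 4; rwa [show pα 4 = 5 from by decide] at this
  have key : ∀ x : Fin 12, x.val < 6 → (s x = x ↔ s 0 = 0) := by
    intro x hx
    rcases hall x with rfl|rfl|rfl|rfl|rfl|rfl|rfl|rfl|rfl|rfl|rfl|rfl
    · exact Iff.rfl
    · exact i01.symm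
    · exact (i01.trans i12).symm
    · exact ((i01.trans i12).trans i23).symm
    · exact (((i01.trans i12).trans i23).trans i34).symm
    · exact ((((i01.trans i12).trans i23).trans i34).trans i45).symm
    all_goals exact absurd hx (by decide)
  intro x z hx hz hfx
  exact (key z hz).mpr ((key x hx).mp hfx)

lemma fixB (s : Equiv.Perm (Fin 12)) (hs : pα * s * pα⁻¹ = s ^ 2) (h63 : s ^ 63 = 1) :
    ∀ x z : Fin 12, 6 ≤ x.val → 6 ≤ z.val → s x = x → s z = z := by
  have hc := fixchain s hs h63
  have i01 : s 6 = 6 ↔ s 7 = 7 := by have := hc 6; rwa [show pα 6 = 7 from by decide] at this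
  have i12 : s 7 = 7 ↔ s 8 = 8 := by have := hc 7; rwa [show pα 7 = 8 from by decide] at this
  have i23 : s 8 = 8 ↔ s 9 = 9 := by have := hc 8; rwa [show pα 8 = 9 from by decide] at this
  have i34 : s 9 = 9 ↔ s 10 = 10 := by have := hc 9; rwa [show pα 9 = 10 from by decide] at this
  have i45 : s 10 = 10 ↔ s 11 = 11 := by
    have := hc 10; rwa [show pα 10 = 11 from by decide] at this
  have key : ∀ x : Fin 12, 6 ≤ x.val → (s x = x ↔ s 6 = 6) := by
    intro x hx
    rcases hall x with rfl|rfl|rfl|rfl|rfl|rfl|rfl|rfl|rfl|rfl|rfl|rfl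
    · exact absurd hx (by decide)
    · exact absurd hx (by decide)
    · exact absurd hx (by decide)
    · exact absurd hx (by decide)
    · exact absurd hx (by decide)
    · exact absurd hx (by decide)
    · exact Iff.rfl
    · exact i01.symm
    · exact (i01.trans i12).symm
    · exact ((i01.trans i12).trans i23).symm
    · exact (((i01.trans i12).trans i23).trans i34).symm
    · exact ((((i01.trans i12).trans i23).trans i34).trans i45).symm
  intro x z hx hz hfx
  exact (key z hz).mpr ((key x hx).mp hfx)

lemma dmoves7 (s : Equiv.Perm (Fin 12)) (hpow : s ^ 7 = 1) (z : Fin 12) (h1 : s z ≠ z) :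
    ∀ d, 0 < d → d < 7 → (s ^ d) z ≠ z := by
  have hred : ∀ a b : ℕ, s ^ (7 * a + b) = s ^ b := fun a b => by
    rw [pow_add, pow_mul, hpow, one_pow, one_mul]
  intro d hd1 hd2 hcon
  interval_cases d
  · rw [pow_one] at hcon; exact h1 hcon
  · have h := piter (s ^ 2) z hcon 4
    rw [← pow_mul] at h; norm_num at h
    rw [show s ^ (8:ℕ) = s ^ 1 from hred 1 1, pow_one] at h
    exact h1 h
  · have h := piter (s ^ 3) z hcon 5
    rw [← pow_mul] at h; norm_num at h
    rw [show s ^ (15:ℕ) = s ^ 1 from hred 2 1, pow_one] at h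
    exact h1 h
  · have h := piter (s ^ 4) z hcon 2
    rw [← pow_mul] at h; norm_num at h
    rw [show s ^ (8:ℕ) = s ^ 1 from hred 1 1, pow_one] at h
    exact h1 h
  · have h := piter (s ^ 5) z hcon 3
    rw [← pow_mul] at h; norm_num at h
    rw [show s ^ (15:ℕ) = s ^ 1 from hred 2 1, pow_one] at h
    exact h1 h
  · have h := piter (s ^ 6) z hcon 6
    rw [← pow_mul] at h; norm_num at h
    rw [show s ^ (36:ℕ) = s ^ 1 from hred 5 1, pow_one] at h
    exact h1 h

lemma dmoves9 (s : Equiv.Perm (Fin 12)) (hpow : s ^ 9 = 1) (z : Fin 12)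
    (h3 : (s ^ 3) z ≠ z) : ∀ d, 0 < d → d < 9 → (s ^ d) z ≠ z := by
  have hred : ∀ a b : ℕ, s ^ (9 * a + b) = s ^ b := fun a b => by
    rw [pow_add, pow_mul, hpow, one_pow, one_mul]
  intro d hd1 hd2 hcon
  interval_cases d
  · rw [pow_one] at hcon
    exact h3 (piter s z hcon 3)
  · have h := piter (s ^ 2) z hcon 6
    rw [← pow_mul] at h; norm_num at h
    rw [show s ^ (12:ℕ) = s ^ 3 from hred 1 3] at h
    exact h3 h
  · exact h3 hcon
  · have h := piter (s ^ 4) z hcon 3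
    rw [← pow_mul] at h; norm_num at h
    rw [show s ^ (12:ℕ) = s ^ 3 from hred 1 3] at h
    exact h3 h
  · have h := piter (s ^ 5) z hcon 6
    rw [← pow_mul] at h; norm_num at h
    rw [show s ^ (30:ℕ) = s ^ 3 from hred 3 3] at h
    exact h3 h
  · have h := piter (s ^ 6) z hcon 2
    rw [← pow_mul] at h; norm_num at h
    rw [show s ^ (12:ℕ) = s ^ 3 from hred 1 3] at h
    exact h3 h
  · have h := piter (s ^ 7) z hcon 3
    rw [← pow_mul] at h; norm_num at h
    rw [show s ^ (21:ℕ) = s ^ 3 from hred 2 3] at h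
    exact h3 h
  · have h := piter (s ^ 8) z hcon 6
    rw [← pow_mul] at h; norm_num at h
    rw [show s ^ (48:ℕ) = s ^ 3 from hred 5 3] at h
    exact h3 h

lemma orbit_inj (s : Equiv.Perm (Fin 12)) (n : ℕ) (z : Fin 12)
    (hd : ∀ d, 0 < d → d < n → (s ^ d) z ≠ z) :
    Function.Injective fun i : Fin n => (s ^ (i : ℕ)) z := by
  have key : ∀ i j : Fin n, (i : ℕ) ≤ (j : ℕ) → (s ^ (i : ℕ)) z = (s ^ (j : ℕ)) z → i = j := by
    intro i j hle he
    by_contra hne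
    have hij : (i : ℕ) ≠ (j : ℕ) := fun hh => hne (Fin.ext hh)
    have hd0 : 0 < (j : ℕ) - (i : ℕ) := by omega
    have hj : (j : ℕ) = (i : ℕ) + ((j : ℕ) - (i : ℕ)) := by omega
    rw [hj, pow_add, Equiv.Perm.mul_apply] at he
    have h2 : (s ^ ((j : ℕ) - (i : ℕ))) z = z := (s ^ (i : ℕ)).injective he.symm
    exact hd _ hd0 (by omega) h2
  intro i j he
  rcases le_total (i : ℕ) (j : ℕ) with h | h
  · exact key i j h he
  · exact (key j i h he.symm).symm

lemma hit_both (O : Finset (Fin 12)) (h : 7 ≤ O.card) :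
    (∃ a ∈ O, a.val < 6) ∧ (∃ b ∈ O, 6 ≤ b.val) := by
  constructor
  · by_contra hc
    push_neg at hc
    have hsub : O ⊆ ({6,7,8,9,10,11} : Finset (Fin 12)) := fun z hz =>
      memhigh z (by have := hc z hz; omega)
    have h1 := Finset.card_le_card hsub
    have h2 : ({6,7,8,9,10,11} : Finset (Fin 12)).card = 6 := by decide
    omega
  · by_contra hc
    push_neg at hc
    have hsub : O ⊆ ({0,1,2,3,4,5} : Finset (Fin 12)) := fun z hz =>
      memlow z (by have := hc z hz; omega)
    have h1 := Finset.card_le_card hsub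
    have h2 : ({0,1,2,3,4,5} : Finset (Fin 12)).card = 6 := by decide
    omega

lemma two_orbits (s : Equiv.Perm (Fin 12)) (n : ℕ) (h7 : 7 ≤ n) (h12 : n < 12)
    (h2n : 12 < 2 * n) (hpow : s ^ n = 1)
    (hmv : ∀ z d, 0 < d → d < n → (s ^ d) z ≠ z) : False := by
  have hnpos : 0 < n := by omega
  have powmod : ∀ m, s ^ m = s ^ (m % n) := by
    intro m
    conv_lhs => rw [← Nat.div_add_mod m n]
    rw [pow_add, pow_mul, hpow, one_pow, one_mul]
  have injf := orbit_inj s n 0 (hmv 0)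
  set O := Finset.image (fun i : Fin n => (s ^ (i : ℕ)) 0) Finset.univ with hO
  have cardO : O.card = n := by
    rw [hO, Finset.card_image_of_injective _ injf, Finset.card_univ, Fintype.card_fin]
  obtain ⟨z, hz⟩ : ∃ z, z ∉ O := by
    by_contra hc
    push_neg at hc
    have hsub : (Finset.univ : Finset (Fin 12)) ⊆ O := fun w _ => hc w
    have h1 := Finset.card_le_card hsub
    rw [cardO, Finset.card_univ, Fintype.card_fin] at h1
    omega
  have injz := orbit_inj s n z (hmv z)
  set O' := Finset.image (fun i : Fin n => (s ^ (i : ℕ)) z) Finset.univ with hO'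
  have cardO' : O'.card = n := by
    rw [hO', Finset.card_image_of_injective _ injz, Finset.card_univ, Fintype.card_fin]
  have hdisj : Disjoint O O' := by
    rw [Finset.disjoint_left]
    intro a haO haO'
    obtain ⟨i, -, hi⟩ := Finset.mem_image.mp haO
    obtain ⟨j, -, hj⟩ := Finset.mem_image.mp haO'
    apply hz
    have hji : (s ^ ((j : ℕ))) z = (s ^ ((i : ℕ))) 0 := hj.trans hi.symm
    have h1 : (s ^ (n - (j : ℕ))) ((s ^ (j : ℕ)) z) = z := by
      rw [← Equiv.Perm.mul_apply, ← pow_add, show n - (j : ℕ) + (j : ℕ) = n by omega, hpow]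
      rfl
    have h2 : z = (s ^ ((n - (j : ℕ) + (i : ℕ)) % n)) 0 := by
      calc z = (s ^ (n - (j : ℕ))) ((s ^ (j : ℕ)) z) := h1.symm
        _ = (s ^ (n - (j : ℕ))) ((s ^ (i : ℕ)) 0) := by rw [hji]
        _ = (s ^ (n - (j : ℕ) + (i : ℕ))) 0 := by rw [pow_add, Equiv.Perm.mul_apply]
        _ = (s ^ ((n - (j : ℕ) + (i : ℕ)) % n)) 0 := by rw [← powmod]
    rw [hO, Finset.mem_image]
    exact ⟨⟨_, Nat.mod_lt _ hnpos⟩, Finset.mem_univ _, h2.symm⟩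
  have hcard : (O ∪ O').card = 2 * n := by
    rw [Finset.card_union_of_disjoint hdisj, cardO, cardO']
    ring
  have hle := Finset.card_le_univ (O ∪ O')
  rw [hcard, Fintype.card_fin] at hle
  omega



lemma hcomm_pow (g : Equiv.Perm (Fin 12)) (a b : ℕ) (w : Fin 12) :
    (g ^ a) ((g ^ b) w) = (g ^ b) ((g ^ a) w) := by
  rw [← Equiv.Perm.mul_apply, ← Equiv.Perm.mul_apply, ← pow_add, ← pow_add, add_comm]

lemma cube_one (y : Equiv.Perm (Fin 12)) (hy : pα * y * pα⁻¹ = y ^ 2) : y ^ 3 = 1 := by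
  have hconj : ∀ k : ℕ, y ^ 2 ^ k = pα ^ k * y * (pα ^ k)⁻¹ := by
    intro k
    induction k with
    | zero => simp
    | succ k ih =>
      have h1 : y ^ 2 ^ (k + 1) = (y ^ 2 ^ k) ^ 2 := by rw [pow_succ, pow_mul]
      rw [h1, ih]
      have h2 : (pα ^ k * y * (pα ^ k)⁻¹) ^ 2 = pα ^ k * y ^ 2 * (pα ^ k)⁻¹ := by
        rw [sq, sq]; group
      rw [h2, ← hy]
      group
  have h64 : y ^ 64 = y := by
    have h := hconj 6
    norm_num at h
    rw [h, hα6]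
    simp
  have h63 : y ^ 63 = 1 := by
    have h : y ^ 63 * y = 1 * y := by rw [one_mul, ← pow_succ]; exact h64
    exact mul_right_cancel h
  have hsolm : ∀ m : ℕ, pα * y ^ m * pα⁻¹ = (y ^ m) ^ 2 := by
    intro m
    have h1 : (MulAut.conj pα) (y ^ m) = ((MulAut.conj pα) y) ^ m := map_pow _ _ _
    simp only [MulAut.conj_apply] at h1
    rw [h1, hy, ← pow_mul, mul_comm, pow_mul]
  have h63m : ∀ m : ℕ, (y ^ m) ^ 63 = 1 := by
    intro m
    rw [← pow_mul, mul_comm, pow_mul, h63, one_pow]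
  -- step 1 : y ^ 9 = 1
  have hy9 : y ^ 9 = 1 := by
    by_contra hne
    have hex : ¬ ∀ x, (y ^ 9) x = x := fun hall' =>
      hne (Equiv.ext fun x => (hall' x))
    obtain ⟨x, hx⟩ := not_forall.mp hex
    set v := y ^ 9 with hv
    have hv7 : v ^ 7 = 1 := by
      rw [hv, ← pow_mul, show (9 * 7 : ℕ) = 63 from rfl]
      exact h63
    have hsolv : pα * v * pα⁻¹ = v ^ 2 := hsolm 9
    have h63v : v ^ 63 = 1 := h63m 9
    have hdx := dmoves7 v hv7 x hx
    have injx := orbit_inj v 7 x hdx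
    set O := Finset.image (fun i : Fin 7 => (v ^ (i : ℕ)) x) Finset.univ with hO
    have cardO : O.card = 7 := by
      rw [hO, Finset.card_image_of_injective _ injx, Finset.card_univ, Fintype.card_fin]
    have hmoved : ∀ a ∈ O, v a ≠ a := by
      intro a ha
      obtain ⟨i, -, hi⟩ := Finset.mem_image.mp ha
      rw [← hi]
      intro heq
      have h1 : v ((v ^ (i : ℕ)) x) = (v ^ (i : ℕ)) (v x) := by
        rw [← Equiv.Perm.mul_apply, ← Equiv.Perm.mul_apply, ← pow_succ', ← pow_succ]
      rw [h1] at heq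
      exact hx ((v ^ (i : ℕ)).injective heq)
    obtain ⟨⟨a, haO, ha6⟩, b, hbO, hb6⟩ := hit_both O (by rw [cardO])
    have hallz : ∀ z, v z ≠ z := by
      intro z
      rcases Nat.lt_or_ge z.val 6 with h | h
      · exact fun hfix => hmoved a haO (fixA v hsolv h63v z a h ha6 hfix)
      · exact fun hfix => hmoved b hbO (fixB v hsolv h63v z b h hb6 hfix)
    exact two_orbits v 7 (by norm_num) (by norm_num) (by norm_num) hv7
      (fun z d hd1 hd2 => dmoves7 v hv7 z (hallz z) d hd1 hd2)
  -- step 2 : y ^ 3 = 1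
  by_contra hne
  have hex : ¬ ∀ x, (y ^ 3) x = x := fun hall' => hne (Equiv.ext fun x => hall' x)
  obtain ⟨x, hx⟩ := not_forall.mp hex
  have hdx := dmoves9 y hy9 x hx
  have injx := orbit_inj y 9 x hdx
  set O := Finset.image (fun i : Fin 9 => (y ^ (i : ℕ)) x) Finset.univ with hO
  have cardO : O.card = 9 := by
    rw [hO, Finset.card_image_of_injective _ injx, Finset.card_univ, Fintype.card_fin]
  have hmoved : ∀ a ∈ O, (y ^ 3) a ≠ a := by
    intro a ha
    obtain ⟨i, -, hi⟩ := Finset.mem_image.mp ha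
    rw [← hi]
    intro heq
    rw [hcomm_pow y 3 (i : ℕ) x] at heq
    exact hx ((y ^ (i : ℕ)).injective heq)
  have hsol3 : pα * y ^ 3 * pα⁻¹ = (y ^ 3) ^ 2 := hsolm 3
  have h633 : (y ^ 3) ^ 63 = 1 := h63m 3
  obtain ⟨⟨a, haO, ha6⟩, b, hbO, hb6⟩ := hit_both O (by rw [cardO]; norm_num)
  have hallz : ∀ z, (y ^ 3) z ≠ z := by
    intro z
    rcases Nat.lt_or_ge z.val 6 with h | h
    · exact fun hfix => hmoved a haO (fixA (y ^ 3) hsol3 h633 z a h ha6 hfix)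
    · exact fun hfix => hmoved b hbO (fixB (y ^ 3) hsol3 h633 z b h hb6 hfix)
  exact two_orbits y 9 (by norm_num) (by norm_num) (by norm_num) hy9
    (fun z d hd1 hd2 => dmoves9 y hy9 z (hallz z) d hd1 hd2)



lemma classify (y : Equiv.Perm (Fin 12)) (hy : pα * y * pα⁻¹ = y ^ 2) :
    ∃ i j : ℕ, i ≤ 2 ∧ j ≤ 2 ∧ y = py₁ ^ i * py₂ ^ j := by
  have h3 : y ^ 3 = 1 := cube_one y hy
  -- y commutes with pα ^ 2
  have hsolm2 : pα * y ^ 2 * pα⁻¹ = (y ^ 2) ^ 2 := by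
    have h1 : (MulAut.conj pα) (y ^ 2) = ((MulAut.conj pα) y) ^ 2 := map_pow _ _ _
    simp only [MulAut.conj_apply] at h1
    rw [h1, hy]
  have h4 : pα ^ 2 * y * (pα ^ 2)⁻¹ = (y ^ 2) ^ 2 := by
    calc pα ^ 2 * y * (pα ^ 2)⁻¹ = pα * (pα * y * pα⁻¹) * pα⁻¹ := by
          rw [sq, mul_inv_rev]; simp only [mul_assoc]
      _ = pα * y ^ 2 * pα⁻¹ := by rw [hy]
      _ = (y ^ 2) ^ 2 := hsolm2
  have h4y : (y ^ 2) ^ 2 = y := by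
    rw [← pow_mul, show (2 * 2 : ℕ) = 3 + 1 from rfl, pow_succ, h3, one_mul]
  have hcm : pα ^ 2 * y = y * pα ^ 2 := by
    have hfix : pα ^ 2 * y * (pα ^ 2)⁻¹ = y := h4.trans h4y
    have h := congrArg (fun p : Equiv.Perm (Fin 12) => p * pα ^ 2) hfix
    simpa only [inv_mul_cancel_right] using h
  have hbpt : ∀ x : Fin 12, y (bfn x) = bfn (y x) := by
    intro x
    have h := congrArg (fun p : Equiv.Perm (Fin 12) => p x) hcm
    simp only [Equiv.Perm.mul_apply] at h
    rw [hbapply, hbapply] at h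
    exact h.symm
  -- y ∘ α ∘ y = α
  have hinv : y ^ 2 = y⁻¹ := by
    have h1 : y ^ 2 * y = 1 := by rw [← pow_succ]; exact h3
    exact eq_inv_of_mul_eq_one_left h1
  have h6 : pα * y * pα⁻¹ = y⁻¹ := by rw [hy, hinv]
  have h5 : y * pα * y = pα := by
    calc y * pα * y = y * (pα * y * pα⁻¹) * pα := by group
      _ = y * y⁻¹ * pα := by rw [h6]
      _ = pα := by group
  have hyay : ∀ x : Fin 12, y (afn (y x)) = afn x := by
    intro x
    have h := congrArg (fun p : Equiv.Perm (Fin 12) => p x) h5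
    simp only [Equiv.Perm.mul_apply] at h
    rw [happly, happly] at h
    exact h
  have cAll3 : ∀ x : Fin 12, y (y (y x)) = x := by
    intro x
    have h := congrArg (fun p : Equiv.Perm (Fin 12) => p x) h3
    simp only [Equiv.Perm.mul_apply, pow_succ, pow_zero, one_mul,
      Equiv.Perm.one_apply] at h
    exact h
  -- full determination of y by its values at 0, 1, 6, 7
  have hg : ∀ x : Fin 12, y x = gfn (y 0) (y 1) (y 6) (y 7) x := by
    intro x
    rcases hall x with rfl|rfl|rfl|rfl|rfl|rfl|rfl|rfl|rfl|rfl|rfl|rfl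
    · rfl
    · rfl
    · exact hbpt 0
    · exact hbpt 1
    · exact (hbpt 2).trans (congrArg bfn (hbpt 0))
    · exact (hbpt 3).trans (congrArg bfn (hbpt 1))
    · rfl
    · rfl
    · exact hbpt 6
    · exact hbpt 7
    · exact (hbpt 8).trans (congrArg bfn (hbpt 6))
    · exact (hbpt 9).trans (congrArg bfn (hbpt 7))
  -- the induced block permutation
  have hπ : ∀ x : Fin 12,
      blk (y x) = tbl (blk (y 0)) (blk (y 1)) (blk (y 6)) (blk (y 7)) (blk x) := by
    intro x
    rcases hall x with rfl|rfl|rfl|rfl|rfl|rfl|rfl|rfl|rfl|rfl|rfl|rfl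
    · rfl
    · rfl
    · have e : y 2 = bfn (y 0) := hbpt 0
      rw [e, hblkb]; rfl
    · have e : y 3 = bfn (y 1) := hbpt 1
      rw [e, hblkb]; rfl
    · have e : y 4 = bfn (bfn (y 0)) := (hbpt 2).trans (congrArg bfn (hbpt 0))
      rw [e, hblkb, hblkb]; rfl
    · have e : y 5 = bfn (bfn (y 1)) := (hbpt 3).trans (congrArg bfn (hbpt 1))
      rw [e, hblkb, hblkb]; rfl
    · rfl
    · rfl
    · have e : y 8 = bfn (y 6) := hbpt 6
      rw [e, hblkb]; rfl
    · have e : y 9 = bfn (y 7) := hbpt 7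
      rw [e, hblkb]; rfl
    · have e : y 10 = bfn (bfn (y 6)) := (hbpt 8).trans (congrArg bfn (hbpt 6))
      rw [e, hblkb, hblkb]; rfl
    · have e : y 11 = bfn (bfn (y 7)) := (hbpt 9).trans (congrArg bfn (hbpt 7))
      rw [e, hblkb, hblkb]; rfl
  set P : Fin 4 → Fin 4 := tbl (blk (y 0)) (blk (y 1)) (blk (y 6)) (blk (y 7)) with hP
  have c1 : ∀ k : Fin 4, P (P (P k)) = k := by
    have mk : ∀ x : Fin 12, P (P (P (blk x))) = blk x := by
      intro x
      calc P (P (P (blk x))) = P (P (blk (y x))) := by rw [← hπ x]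
        _ = P (blk (y (y x))) := by rw [← hπ (y x)]
        _ = blk (y (y (y x))) := by rw [← hπ (y (y x))]
        _ = blk x := by rw [cAll3 x]
    intro k
    rcases hall4 k with rfl|rfl|rfl|rfl
    · exact mk 0
    · exact mk 1
    · exact mk 6
    · exact mk 7
  have c2 : ∀ k : Fin 4, P (tauf (P k)) = tauf k := by
    have mk : ∀ x : Fin 12, P (tauf (P (blk x))) = tauf (blk x) := by
      intro x
      calc P (tauf (P (blk x))) = P (tauf (blk (y x))) := by rw [← hπ x]
        _ = P (blk (afn (y x))) := by rw [hblkt]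
        _ = blk (y (afn (y x))) := by rw [← hπ (afn (y x))]
        _ = blk (afn x) := by rw [hyay x]
        _ = tauf (blk x) := hblkt x
    intro k
    rcases hall4 k with rfl|rfl|rfl|rfl
    · exact mk 0
    · exact mk 1
    · exact mk 6
    · exact mk 7
  obtain ⟨e0, e1, e2, e3⟩ := decideπ (blk (y 0)) (blk (y 1)) (blk (y 6)) (blk (y 7)) c1 c2
  have hy0 := blk0cases (y 0) e0
  have hy6 := blk2cases (y 6) e2
  have hu0 := hyay 0
  have hu6 := hyay 6
  rcases hy0 with h0 | h0 | h0
  · -- y 0 = 0, y 1 = 1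
    have hu : y 1 = 1 := by rw [h0] at hu0; exact hu0
    rcases hy6 with h6 | h6 | h6
    · have hw : y 7 = 7 := by rw [h6] at hu6; exact hu6
      refine ⟨0, 0, by norm_num, by norm_num, Equiv.ext fun x => ?_⟩
      rw [hg x, h0, hu, h6, hw]
      exact (by decide : ∀ z : Fin 12, gfn 0 1 6 7 z = (py₁ ^ 0 * py₂ ^ 0) z) x
    · have h9 : y 9 = 7 := by rw [h6] at hu6; exact hu6
      have hbw : bfn (y 7) = 7 := (hg 9).symm.trans h9
      have hw : y 7 = 11 := binv7 _ hbw
      refine ⟨0, 1, by norm_num, by norm_num, Equiv.ext fun x => ?_⟩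
      rw [hg x, h0, hu, h6, hw]
      exact (by decide : ∀ z : Fin 12, gfn 0 1 8 11 z = (py₁ ^ 0 * py₂ ^ 1) z) x
    · have h11 : y 11 = 7 := by rw [h6] at hu6; exact hu6
      have hbw : bfn (bfn (y 7)) = 7 := (hg 11).symm.trans h11
      have hw : y 7 = 9 := bbinv7 _ hbw
      refine ⟨0, 2, by norm_num, by norm_num, Equiv.ext fun x => ?_⟩
      rw [hg x, h0, hu, h6, hw]
      exact (by decide : ∀ z : Fin 12, gfn 0 1 10 9 z = (py₁ ^ 0 * py₂ ^ 2) z) x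
  · -- y 0 = 2, y 1 = 5
    have h3' : y 3 = 1 := by rw [h0] at hu0; exact hu0
    have hbu : bfn (y 1) = 1 := (hg 3).symm.trans h3'
    have hu : y 1 = 5 := binv1 _ hbu
    rcases hy6 with h6 | h6 | h6
    · have hw : y 7 = 7 := by rw [h6] at hu6; exact hu6
      refine ⟨1, 0, by norm_num, by norm_num, Equiv.ext fun x => ?_⟩
      rw [hg x, h0, hu, h6, hw]
      exact (by decide : ∀ z : Fin 12, gfn 2 5 6 7 z = (py₁ ^ 1 * py₂ ^ 0) z) x
    · have h9 : y 9 = 7 := by rw [h6] at hu6; exact hu6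
      have hbw : bfn (y 7) = 7 := (hg 9).symm.trans h9
      have hw : y 7 = 11 := binv7 _ hbw
      refine ⟨1, 1, by norm_num, by norm_num, Equiv.ext fun x => ?_⟩
      rw [hg x, h0, hu, h6, hw]
      exact (by decide : ∀ z : Fin 12, gfn 2 5 8 11 z = (py₁ ^ 1 * py₂ ^ 1) z) x
    · have h11 : y 11 = 7 := by rw [h6] at hu6; exact hu6
      have hbw : bfn (bfn (y 7)) = 7 := (hg 11).symm.trans h11
      have hw : y 7 = 9 := bbinv7 _ hbw
      refine ⟨1, 2, by norm_num, by norm_num, Equiv.ext fun x => ?_⟩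
      rw [hg x, h0, hu, h6, hw]
      exact (by decide : ∀ z : Fin 12, gfn 2 5 10 9 z = (py₁ ^ 1 * py₂ ^ 2) z) x
  · -- y 0 = 4, y 1 = 3
    have h5' : y 5 = 1 := by rw [h0] at hu0; exact hu0
    have hbu : bfn (bfn (y 1)) = 1 := (hg 5).symm.trans h5'
    have hu : y 1 = 3 := bbinv1 _ hbu
    rcases hy6 with h6 | h6 | h6
    · have hw : y 7 = 7 := by rw [h6] at hu6; exact hu6
      refine ⟨2, 0, by norm_num, by norm_num, Equiv.ext fun x => ?_⟩
      rw [hg x, h0, hu, h6, hw]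
      exact (by decide : ∀ z : Fin 12, gfn 4 3 6 7 z = (py₁ ^ 2 * py₂ ^ 0) z) x
    · have h9 : y 9 = 7 := by rw [h6] at hu6; exact hu6
      have hbw : bfn (y 7) = 7 := (hg 9).symm.trans h9
      have hw : y 7 = 11 := binv7 _ hbw
      refine ⟨2, 1, by norm_num, by norm_num, Equiv.ext fun x => ?_⟩
      rw [hg x, h0, hu, h6, hw]
      exact (by decide : ∀ z : Fin 12, gfn 4 3 8 11 z = (py₁ ^ 2 * py₂ ^ 1) z) x
    · have h11 : y 11 = 7 := by rw [h6] at hu6; exact hu6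
      have hbw : bfn (bfn (y 7)) = 7 := (hg 11).symm.trans h11
      have hw : y 7 = 9 := bbinv7 _ hbw
      refine ⟨2, 2, by norm_num, by norm_num, Equiv.ext fun x => ?_⟩
      rw [hg x, h0, hu, h6, hw]
      exact (by decide : ∀ z : Fin 12, gfn 4 3 10 9 z = (py₁ ^ 2 * py₂ ^ 2) z) x



lemma sol_of (i j : ℕ) (hi : i ≤ 2) (hj : j ≤ 2) :
    pα * (py₁ ^ i * py₂ ^ j) * pα⁻¹ = (py₁ ^ i * py₂ ^ j) ^ 2 := by
  interval_cases i <;> interval_cases j <;> decide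

def solF : Finset (Equiv.Perm (Fin 12)) :=
  {py₁ ^ 0 * py₂ ^ 0, py₁ ^ 0 * py₂ ^ 1, py₁ ^ 0 * py₂ ^ 2,
   py₁ ^ 1 * py₂ ^ 0, py₁ ^ 1 * py₂ ^ 1, py₁ ^ 1 * py₂ ^ 2,
   py₁ ^ 2 * py₂ ^ 0, py₁ ^ 2 * py₂ ^ 1, py₁ ^ 2 * py₂ ^ 2}

lemma mem_solF_iff (z : Equiv.Perm (Fin 12)) :
    z ∈ solF ↔ ∃ i j : ℕ, i ≤ 2 ∧ j ≤ 2 ∧ z = py₁ ^ i * py₂ ^ j := by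
  constructor
  · intro hz
    simp only [solF, Finset.mem_insert, Finset.mem_singleton] at hz
    rcases hz with rfl|rfl|rfl|rfl|rfl|rfl|rfl|rfl|rfl
    · exact ⟨0, 0, by norm_num, by norm_num, rfl⟩
    · exact ⟨0, 1, by norm_num, by norm_num, rfl⟩
    · exact ⟨0, 2, by norm_num, by norm_num, rfl⟩
    · exact ⟨1, 0, by norm_num, by norm_num, rfl⟩
    · exact ⟨1, 1, by norm_num, by norm_num, rfl⟩
    · exact ⟨1, 2, by norm_num, by norm_num, rfl⟩
    · exact ⟨2, 0, by norm_num, by norm_num, rfl⟩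
    · exact ⟨2, 1, by norm_num, by norm_num, rfl⟩
    · exact ⟨2, 2, by norm_num, by norm_num, rfl⟩
  · rintro ⟨i, j, hi, hj, rfl⟩
    interval_cases i <;> interval_cases j <;> decide

lemma sol_iff (z : Equiv.Perm (Fin 12)) :
    pα * z * pα⁻¹ = z ^ 2 ↔ ∃ i j : ℕ, i ≤ 2 ∧ j ≤ 2 ∧ z = py₁ ^ i * py₂ ^ j := by
  constructor
  · exact classify z
  · rintro ⟨i, j, hi, hj, rfl⟩
    exact sol_of i j hi hj

lemma set_eq_coe :
    {y : Equiv.Perm (Fin 12) | pα * y * pα⁻¹ = y ^ 2} = (solF : Set (Equiv.Perm (Fin 12))) := by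
  ext z
  rw [Set.mem_setOf_eq, sol_iff z, Finset.mem_coe, mem_solF_iff]

lemma set_eq_coe' :
    {y : Equiv.Perm (Fin 12) | (pα * y * pα⁻¹ = y ^ 2) ∧ y ≠ 1} =
      ((solF.erase 1 : Finset (Equiv.Perm (Fin 12))) : Set (Equiv.Perm (Fin 12))) := by
  ext z
  rw [Set.mem_setOf_eq, Finset.mem_coe, Finset.mem_erase, sol_iff z, ← mem_solF_iff]
  tauto



lemma card9 : solF.card = 9 := by decide
lemma one_mem : (1 : Equiv.Perm (Fin 12)) ∈ solF := by decide
lemma card8 : (solF.erase 1).card = 8 := by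
  rw [Finset.card_erase_of_mem one_mem, card9]

end Stmt17

/-- Corollary (B4). For `α = (1,…,6)∘(7,…,12) ∈ S₁₂` (written 0-indexed on
`Fin 12` as `(0,…,5)∘(6,…,11)`), with `y₁ = (1,3,5)∘(2,6,4)` (0-indexed
`(0,2,4)∘(1,5,3)`) and `y₂ = (7,9,11)∘(8,12,10)` (0-indexed `(6,8,10)∘(7,11,9)`):
`y₁` and `y₂` commute, `y₁³ = y₂³ = 1`, the solution set of `α ∘ y ∘ α⁻¹ = y²`
is exactly `{y₁^i ∘ y₂^j : 0 ≤ i, j ≤ 2}`, and there are exactly `9` solutions,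
`8` of them non-trivial. -/
theorem stmt_17 :
    let α : Equiv.Perm (Fin 12) :=
      ([0, 1, 2, 3, 4, 5] : List (Fin 12)).formPerm *
        ([6, 7, 8, 9, 10, 11] : List (Fin 12)).formPerm
    let y₁ : Equiv.Perm (Fin 12) :=
      ([0, 2, 4] : List (Fin 12)).formPerm * ([1, 5, 3] : List (Fin 12)).formPerm
    let y₂ : Equiv.Perm (Fin 12) :=
      ([6, 8, 10] : List (Fin 12)).formPerm * ([7, 11, 9] : List (Fin 12)).formPerm
    y₁ * y₂ = y₂ * y₁ ∧ y₁ ^ 3 = 1 ∧ y₂ ^ 3 = 1 ∧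
    {y : Equiv.Perm (Fin 12) | α * y * α⁻¹ = y ^ 2} =
      {y : Equiv.Perm (Fin 12) | ∃ i j : ℕ, i ≤ 2 ∧ j ≤ 2 ∧ y = y₁ ^ i * y₂ ^ j} ∧
    Set.ncard {y : Equiv.Perm (Fin 12) | α * y * α⁻¹ = y ^ 2} = 9 ∧
    Set.ncard {y : Equiv.Perm (Fin 12) | (α * y * α⁻¹ = y ^ 2) ∧ y ≠ 1} = 8 := by
  intro α y₁ y₂
  refine ⟨(by decide : Stmt17.py₁ * Stmt17.py₂ = Stmt17.py₂ * Stmt17.py₁),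
    (by decide : Stmt17.py₁ ^ 3 = 1), (by decide : Stmt17.py₂ ^ 3 = 1), ?_, ?_, ?_⟩
  · show {y : Equiv.Perm (Fin 12) | Stmt17.pα * y * Stmt17.pα⁻¹ = y ^ 2} =
      {y : Equiv.Perm (Fin 12) | ∃ i j : ℕ, i ≤ 2 ∧ j ≤ 2 ∧ y = Stmt17.py₁ ^ i * Stmt17.py₂ ^ j}
    ext z
    rw [Set.mem_setOf_eq, Set.mem_setOf_eq]
    exact Stmt17.sol_iff z
  · show Set.ncard {y : Equiv.Perm (Fin 12) | Stmt17.pα * y * Stmt17.pα⁻¹ = y ^ 2} = 9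
    rw [Stmt17.set_eq_coe, Set.ncard_coe_finset, Stmt17.card9]
  · show Set.ncard
      {y : Equiv.Perm (Fin 12) | (Stmt17.pα * y * Stmt17.pα⁻¹ = y ^ 2) ∧ y ≠ 1} = 8
    rw [Stmt17.set_eq_coe', Set.ncard_coe_finset, Stmt17.card8]
end
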